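/- arXiv:2409.06459 — 5 statements merged into one kernel-verified Lean document; each statement's English description precedes it below -/
import Mathlib

section
/- Let R be a commutative ring of characteristic p > 0 and b, c ∈ R. Write [b+c] − [b] − [c] = (0, f_1, …, f_{n-1}) in W_n(R) (Witt vector coordinates). Then the first coordinate is 0, and for each i ≥ 1, f_i lies in the ideal of R generated by the products b^{p^i − j} c^j for 1 ≤ j ≤ p^i − 1. -/
noncomputable section

/-- Verschiebung on truncated Witt vectors. -/
def TWV.V {p : ℕ} [Fact p.Prime] {R : Type*} [CommRing R] {n : ℕ}
    (x : TruncatedWittVector p n R) : TruncatedWittVector p (n + 1) R :=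
  WittVector.truncateFun (n + 1) (WittVector.verschiebung x.out)

/-- Frobenius on truncated Witt vectors over a ring of characteristic `p`,
acting coordinatewise by `x ↦ x ^ p`. -/
def TWV.F {p : ℕ} [Fact p.Prime] {R : Type*} [CommRing R] {n : ℕ}
    (x : TruncatedWittVector p n R) : TruncatedWittVector p n R :=
  TruncatedWittVector.mk p fun i => x.coeff i ^ p

/-- Teichmüller lift to truncated Witt vectors. -/
def TWV.tm (p : ℕ) [Fact p.Prime] {R : Type*} [CommRing R] (n : ℕ) (x : R) :
    TruncatedWittVector p n R :=
  WittVector.truncateFun n (WittVector.teichmuller p x)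

/-- Witt-vector tight closure of an ideal of the truncated Witt vectors. -/
def TWV.star {p : ℕ} [Fact p.Prime] {R : Type*} [CommRing R] {n : ℕ}
    (I : Ideal (TruncatedWittVector p n R)) : Set (TruncatedWittVector p n R) :=
  {α | ∃ c ∈ nonZeroDivisors R, ∀ e : ℕ,
    TWV.tm p n c * TWV.F^[e] α ∈ Ideal.span (TWV.F^[e] '' I)}


namespace WittAux
open WittVector MvPolynomial
variable {p : ℕ} [hp : Fact p.Prime]

theorem tmul_aux1 {σ : Type*} (a : MvPolynomial σ ℚ) (x : WittVector p (MvPolynomial σ ℚ)) :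
    teichmuller p a * x = mk p fun n => a ^ p ^ n * x.coeff n := by
  apply (ghostMap.bijective_of_invertible p _).1
  funext n
  rw [ghostMap_apply, ghostMap_apply, RingHom.map_mul, ghostComponent_teichmuller,
    ghostComponent_apply, ghostComponent_apply, aeval_wittPolynomial, aeval_wittPolynomial,
    Finset.mul_sum]
  refine Finset.sum_congr rfl fun i hi => ?_
  rw [Finset.mem_range, Nat.lt_succ_iff] at hi
  have h : p ^ i * p ^ (n - i) = p ^ n := by rw [← pow_add, Nat.add_sub_cancel' hi]
  simp only [coeff_mk]
  rw [mul_pow, ← pow_mul, h]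
  ring

theorem tmul_aux2 {σ : Type*} (a : MvPolynomial σ ℤ) (x : WittVector p (MvPolynomial σ ℤ)) :
    teichmuller p a * x = mk p fun n => a ^ p ^ n * x.coeff n := by
  have inj : Function.Injective (MvPolynomial.map (Int.castRingHom ℚ) :
      MvPolynomial σ ℤ → MvPolynomial σ ℚ) :=
    MvPolynomial.map_injective _ Int.cast_injective
  apply WittVector.map_injective _ inj
  rw [RingHom.map_mul, map_teichmuller]
  rw [tmul_aux1]
  ext k
  simp [WittVector.map_coeff, coeff_mk]

theorem teichmuller_mul_coeff {R : Type*} [CommRing R] (a : R) (x : WittVector p R) (n : ℕ) :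
    (teichmuller p a * x).coeff n = a ^ p ^ n * x.coeff n := by
  let φ : MvPolynomial R ℤ →+* R := MvPolynomial.counit R
  let A : MvPolynomial R ℤ := X a
  let X' : WittVector p (MvPolynomial R ℤ) := mk p fun k => X (x.coeff k)
  have hA : φ A = a := counit_X a
  have hX : WittVector.map φ X' = x := by
    ext k; simp [φ, X', WittVector.map_coeff, coeff_mk, counit_X]
  have : teichmuller p a * x = WittVector.map φ (teichmuller p A * X') := by
    rw [RingHom.map_mul, map_teichmuller, hA, hX]
  rw [this, tmul_aux2, WittVector.map_coeff, coeff_mk, RingHom.map_mul, RingHom.map_pow, hA]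
  simp [φ, X', coeff_mk, counit_X]

/-- failure of additivity of the Teichmüller map -/
noncomputable def DD {A : Type*} [CommRing A] (b c : A) : WittVector p A :=
  teichmuller p (b + c) - teichmuller p b - teichmuller p c

theorem map_DD {A B : Type*} [CommRing A] [CommRing B] (φ : A →+* B) (b c : A) :
    WittVector.map φ (DD (p := p) b c) = DD (φ b) (φ c) := by
  simp [DD, map_sub, map_teichmuller, map_add]

theorem DD_zero_right {A : Type*} [CommRing A] (b : A) : DD (p := p) b 0 = 0 := by
  simp [DD, teichmuller_zero]

theorem DD_zero_left {A : Type*} [CommRing A] (c : A) : DD (p := p) (0 : A) c = 0 := by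
  simp [DD, teichmuller_zero]

theorem DD_mul {A : Type*} [CommRing A] (u b c : A) :
    DD (p := p) (u * b) (u * c) = teichmuller p u * DD b c := by
  simp only [DD, ← mul_add, MonoidHom.map_mul, mul_sub]

theorem coeff_DD_zero {A : Type*} [CommRing A] (b c : A) :
    (DD (p := p) b c).coeff 0 = 0 := by
  have h : ∀ x : WittVector p A, x.coeff 0 = ghostComponent 0 x := fun x => by
    rw [ghostComponent_apply, wittPolynomial_zero, aeval_X]
  rw [h, DD, map_sub, map_sub, ghostComponent_teichmuller, ghostComponent_teichmuller,
    ghostComponent_teichmuller]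
  simp

abbrev S2 : Type := MvPolynomial (Fin 2) ℤ
abbrev PP : Type := MvPolynomial (Fin 2) (Polynomial ℤ)

theorem sub_aeval_mem_1 (g : S2) :
    g - aeval ![(X 0 : S2), 0] g ∈ Ideal.span {(X 1 : S2)} := by
  induction g using MvPolynomial.induction_on with
  | C a => simp [aeval_C]
  | add f g hf hg =>
      have := Ideal.add_mem _ hf hg
      rw [map_add]; convert this using 1; ring
  | mul_X f i hf =>
      fin_cases i
      · rw [map_mul, aeval_X]
        show f * X 0 - aeval _ f * X 0 ∈ _
        rw [← sub_mul]
        exact Ideal.mul_mem_right _ _ hf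
      · rw [map_mul, aeval_X]
        show f * X 1 - aeval _ f * 0 ∈ _
        rw [mul_zero, sub_zero]
        exact Ideal.mul_mem_left _ _ (Ideal.subset_span rfl)

theorem sub_aeval_mem_0 (g : S2) :
    g - aeval ![0, (X 1 : S2)] g ∈ Ideal.span {(X 0 : S2)} := by
  induction g using MvPolynomial.induction_on with
  | C a => simp [aeval_C]
  | add f g hf hg =>
      have := Ideal.add_mem _ hf hg
      rw [map_add]; convert this using 1; ring
  | mul_X f i hf =>
      fin_cases i
      · rw [map_mul, aeval_X]
        show f * X 0 - aeval _ f * 0 ∈ _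
        rw [mul_zero, sub_zero]
        exact Ideal.mul_mem_left _ _ (Ideal.subset_span rfl)
      · rw [map_mul, aeval_X]
        show f * X 1 - aeval _ f * X 1 ∈ _
        rw [← sub_mul]
        exact Ideal.mul_mem_right _ _ hf

noncomputable def psi : S2 →+* PP :=
  (aeval ![C Polynomial.X * X 0, C Polynomial.X * X 1]).toRingHom

theorem psi_monomial (m : Fin 2 →₀ ℕ) (a : ℤ) :
    psi (monomial m a) =
      monomial m ((a : Polynomial ℤ) * Polynomial.X ^ (m 0 + m 1)) := by
  show (aeval _) _ = _
  rw [aeval_monomial, monomial_eq]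
  rw [Finsupp.prod_fintype _ _ (fun i => pow_zero _),
    Finsupp.prod_fintype _ _ (fun i => pow_zero _)]
  rw [Fin.prod_univ_two, Fin.prod_univ_two]
  have h1 : (algebraMap ℤ PP) a = C (a : Polynomial ℤ) := by
    simp [algebraMap_int_eq, eq_intCast]
  rw [h1, map_mul, map_pow, Matrix.cons_val_zero, Matrix.cons_val_one, Matrix.cons_val_zero]
  rw [mul_pow, mul_pow, pow_add]
  ring

theorem coeff_psi (g : S2) (m : Fin 2 →₀ ℕ) :
    coeff m (psi g) = ((coeff m g : ℤ) : Polynomial ℤ) * Polynomial.X ^ (m 0 + m 1) := by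
  induction g using MvPolynomial.induction_on' with
  | monomial m' a =>
      rw [psi_monomial, coeff_monomial, coeff_monomial]
      split
      · next h => subst h; rfl
      · simp
  | add f g hf hg => rw [map_add, coeff_add, coeff_add, hf, hg, Int.cast_add, add_mul]

theorem support_deg (g : S2) (q : ℕ)
    (h : psi g = C (Polynomial.X ^ q) * MvPolynomial.map (Int.castRingHom (Polynomial ℤ)) g) :
    ∀ m ∈ g.support, m 0 + m 1 = q := by
  intro m hm
  rw [MvPolynomial.mem_support_iff] at hm
  by_contra hq
  have hc := congrArg (MvPolynomial.coeff m) h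
  rw [coeff_psi, coeff_C_mul, MvPolynomial.coeff_map] at hc
  have hc2 := congrArg (fun P => Polynomial.coeff P (m 0 + m 1)) hc
  rw [← Polynomial.C_eq_intCast, Polynomial.coeff_C_mul, Polynomial.coeff_X_pow] at hc2
  have : (Int.castRingHom (Polynomial ℤ)) (coeff m g) = Polynomial.C (coeff m g) := by
    simp [Polynomial.C_eq_intCast]
  rw [this, mul_comm (Polynomial.X ^ q), Polynomial.coeff_C_mul, Polynomial.coeff_X_pow] at hc2
  rw [if_pos rfl, if_neg hq] at hc2
  simp at hc2
  exact hm hc2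

theorem psi_D :
    WittVector.map psi (DD (p := p) (X 0 : S2) (X 1)) =
      teichmuller p (C Polynomial.X) *
        WittVector.map (MvPolynomial.map (Int.castRingHom (Polynomial ℤ)))
          (DD (p := p) (X 0 : S2) (X 1)) := by
  rw [map_DD, map_DD]
  have h0 : psi (X 0) = C Polynomial.X * X 0 := by simp [psi]
  have h1 : psi (X 1) = C Polynomial.X * X 1 := by simp [psi]
  have i0 : (MvPolynomial.map (Int.castRingHom (Polynomial ℤ))) (X 0 : S2) = X 0 := map_X _ 0
  have i1 : (MvPolynomial.map (Int.castRingHom (Polynomial ℤ))) (X 1 : S2) = X 1 := map_X _ 1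
  rw [h0, h1, i0, i1, DD_mul]

theorem univ_mem (i : ℕ) :
    (DD (p := p) (X 0 : S2) (X 1)).coeff i ∈
      Ideal.span {x : S2 | ∃ j, 1 ≤ j ∧ j ≤ p ^ i - 1 ∧ x = X 0 ^ (p ^ i - j) * X 1 ^ j} := by
  set f : S2 := (DD (p := p) (X 0 : S2) (X 1)).coeff i with hf
  -- homogeneity
  have hpsif : psi f = C (Polynomial.X ^ (p ^ i)) *
      MvPolynomial.map (Int.castRingHom (Polynomial ℤ)) f := by
    have := congrArg (fun x : WittVector p PP => x.coeff i) (psi_D (p := p))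
    simp only [WittVector.map_coeff] at this
    rw [hf, this, teichmuller_mul_coeff, WittVector.map_coeff, map_pow]
  have hdeg := support_deg f (p ^ i) hpsif
  -- vanishing under X 1 ↦ 0
  have hv1 : aeval ![(X 0 : S2), 0] f = 0 := by
    have : WittVector.map (aeval ![(X 0 : S2), 0]).toRingHom (DD (p := p) (X 0 : S2) (X 1))
        = 0 := by
      rw [map_DD]
      simp only [AlgHom.toRingHom_eq_coe, RingHom.coe_coe, aeval_X, Matrix.cons_val_zero,
        Matrix.cons_val_one, Matrix.head_cons]
      exact DD_zero_right _
    have h2 := congrArg (fun x : WittVector p S2 => x.coeff i) this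
    simpa only [WittVector.map_coeff, WittVector.zero_coeff, AlgHom.toRingHom_eq_coe,
      RingHom.coe_coe] using h2
  have hv0 : aeval ![0, (X 1 : S2)] f = 0 := by
    have : WittVector.map (aeval ![0, (X 1 : S2)]).toRingHom (DD (p := p) (X 0 : S2) (X 1))
        = 0 := by
      rw [map_DD]
      simp only [AlgHom.toRingHom_eq_coe, RingHom.coe_coe, aeval_X, Matrix.cons_val_zero,
        Matrix.cons_val_one, Matrix.head_cons]
      exact DD_zero_left _
    have h2 := congrArg (fun x : WittVector p S2 => x.coeff i) this
    simpa only [WittVector.map_coeff, WittVector.zero_coeff, AlgHom.toRingHom_eq_coe,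
      RingHom.coe_coe] using h2
  have hm1 : ∀ m ∈ f.support, m 1 ≠ 0 := by
    have hmem : f ∈ Ideal.span (X '' ({1} : Set (Fin 2)) : Set S2) := by
      rw [Set.image_singleton]
      have := sub_aeval_mem_1 f
      rwa [hv1, sub_zero] at this
    intro m hm
    rcases mem_ideal_span_X_image.mp hmem m hm with ⟨j, hj, hjm⟩
    rcases hj with rfl
    exact hjm
  have hm0 : ∀ m ∈ f.support, m 0 ≠ 0 := by
    have hmem : f ∈ Ideal.span (X '' ({0} : Set (Fin 2)) : Set S2) := by
      rw [Set.image_singleton]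
      have := sub_aeval_mem_0 f
      rwa [hv0, sub_zero] at this
    intro m hm
    rcases mem_ideal_span_X_image.mp hmem m hm with ⟨j, hj, hjm⟩
    rcases hj with rfl
    exact hjm
  -- conclude
  rw [← support_sum_monomial_coeff f]
  refine Ideal.sum_mem _ fun m hm => ?_
  have h0 := hm0 m hm
  have h1 := hm1 m hm
  have hd := hdeg m hm
  have hmon : monomial m (coeff m f) = C (coeff m f) * (X 0 ^ (m 0) * X 1 ^ (m 1)) := by
    rw [monomial_eq, Finsupp.prod_fintype _ _ (fun i => pow_zero _), Fin.prod_univ_two]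
  rw [hmon]
  refine Ideal.mul_mem_left _ _ (Ideal.subset_span ?_)
  refine ⟨m 1, by omega, by omega, ?_⟩
  have : p ^ i - m 1 = m 0 := by omega
  rw [this]

end WittAux

/-- The failure of additivity of the Teichmüller map: writing
`[b+c] − [b] − [c] = (0, f₁, …, f_{n-1})`, the 0-th coordinate vanishes and
`f_i` lies in the ideal generated by `b^{p^i − j} c^j`, `1 ≤ j ≤ p^i − 1`. -/
theorem stmt3 {p : ℕ} [Fact p.Prime] {R : Type*} [CommRing R] [CharP R p]
    (n : ℕ) (b c : R) :
    (∀ h : 0 < n,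
      (TWV.tm p n (b + c) - TWV.tm p n b - TWV.tm p n c).coeff ⟨0, h⟩ = 0) ∧
    ∀ i : Fin n, 1 ≤ (i : ℕ) →
      (TWV.tm p n (b + c) - TWV.tm p n b - TWV.tm p n c).coeff i ∈
        Ideal.span {x : R | ∃ j, 1 ≤ j ∧ j ≤ p ^ (i : ℕ) - 1 ∧
          x = b ^ (p ^ (i : ℕ) - j) * c ^ j} := by
  classical
  have key : ∀ i : Fin n,
      (TWV.tm p n (b + c) - TWV.tm p n b - TWV.tm p n c).coeff i
        = (WittAux.DD (p := p) b c).coeff i := by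
    intro i
    have h : TWV.tm p n (b + c) - TWV.tm p n b - TWV.tm p n c
        = WittVector.truncateFun n (WittAux.DD (p := p) b c) := by
      simp only [TWV.tm, WittAux.DD, WittVector.truncateFun_sub]
    rw [h, WittVector.coeff_truncateFun]
  constructor
  · intro h
    rw [key ⟨0, h⟩]
    exact WittAux.coeff_DD_zero b c
  · intro i hi
    rw [key i]
    let φ : WittAux.S2 →+* R := (MvPolynomial.aeval ![b, c]).toRingHom
    have hD : WittAux.DD (p := p) b c
        = WittVector.map φ (WittAux.DD (p := p) (MvPolynomial.X 0) (MvPolynomial.X 1)) := by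
      rw [WittAux.map_DD]
      simp [φ]
    rw [hD, WittVector.map_coeff]
    have hu := WittAux.univ_mem (p := p) (i : ℕ)
    have h2 := Ideal.mem_map_of_mem φ hu
    rw [Ideal.map_span] at h2
    refine Ideal.span_mono ?_ h2
    rintro _ ⟨x, ⟨j, hj1, hj2, rfl⟩, rfl⟩
    refine ⟨j, hj1, hj2, ?_⟩
    simp [φ, map_mul, map_pow]
end
end

section
/- Let R be a Noetherian ring of characteristic p > 0, let x_1, …, x_r be a regular sequence in a commutative R-algebra S, and suppose x_1^{p^e}, …, x_r^{p^e} is a regular sequence on S for every e ≥ 0. Let α_i = [x_i] ∈ W_n(S) be Teichmüller lifts and I_n = (α_1, …, α_r) ⊆ W_n(S). Then for n ≥ 2 and every e ≥ 0 there is a short exact sequence 0 → W_{n-1}(S)/I_{n-1}^{[p^{e+1}]} →(V) W_n(S)/I_n^{[p^e]} →(R) S/I_1^{[p^e]} → 0, where V is induced by Verschiebung and R by the restriction map. -/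
noncomputable section

namespace TWVh

open WittVector TruncatedWittVector Finset

set_option linter.unusedSectionVars false

variable {p : ℕ} [hp : Fact p.Prime] {S : Type*} [CommRing S]

theorem V_coeff_zero {n : ℕ} (β : TruncatedWittVector p n S) :
    (TWV.V β).coeff 0 = 0 := by
  simp [TWV.V]

theorem V_coeff_succ {n : ℕ} (β : TruncatedWittVector p n S) (j : Fin n) :
    (TWV.V β).coeff j.succ = β.coeff j := by
  rw [TWV.V, WittVector.coeff_truncateFun, Fin.val_succ,
    WittVector.verschiebung_coeff_add_one]
  exact TruncatedWittVector.coeff_out β j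

theorem V_eq {n : ℕ} {β : TruncatedWittVector p n S} {w : WittVector p S}
    (hw : WittVector.truncateFun n w = β) :
    TWV.V β = WittVector.truncateFun (n + 1) (WittVector.verschiebung w) := by
  ext i
  induction i using Fin.cases with
  | zero => simp [V_coeff_zero]
  | succ j =>
    rw [V_coeff_succ, WittVector.coeff_truncateFun, Fin.val_succ,
      WittVector.verschiebung_coeff_add_one, ← hw, WittVector.coeff_truncateFun]

theorem V_add {n : ℕ} (a b : TruncatedWittVector p n S) :
    TWV.V (a + b) = TWV.V a + TWV.V b := by
  have hab : WittVector.truncateFun n (a.out + b.out) = a + b := by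
    rw [WittVector.truncateFun_add, truncateFun_out, truncateFun_out]
  rw [V_eq hab, map_add, WittVector.truncateFun_add,
    ← V_eq (truncateFun_out a), ← V_eq (truncateFun_out b)]

theorem V_zero {n : ℕ} : TWV.V (0 : TruncatedWittVector p n S) = 0 := by
  ext i
  induction i using Fin.cases with
  | zero => simp [V_coeff_zero]
  | succ j => simp [V_coeff_succ]

/-- Verschiebung as an additive monoid hom. -/
def Vh (n : ℕ) : TruncatedWittVector p n S →+ TruncatedWittVector p (n + 1) S where
  toFun := TWV.V
  map_zero' := V_zero
  map_add' := V_add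

theorem V_sum {n : ℕ} {ι : Type*} (s : Finset ι) (g : ι → TruncatedWittVector p n S) :
    TWV.V (∑ i ∈ s, g i) = ∑ i ∈ s, TWV.V (g i) :=
  map_sum (Vh n) g s

theorem V_injective {n : ℕ} :
    Function.Injective (TWV.V : TruncatedWittVector p n S → TruncatedWittVector p (n + 1) S) := by
  intro a b h
  ext i
  have := congrArg (TruncatedWittVector.coeff i.succ) h
  simpa [V_coeff_succ] using this

theorem exists_V_eq {n : ℕ} (α : TruncatedWittVector p (n + 1) S) (h : α.coeff 0 = 0) :
    ∃ β : TruncatedWittVector p n S, TWV.V β = α := by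
  refine ⟨TruncatedWittVector.mk p fun i => α.coeff i.succ, ?_⟩
  ext i
  induction i using Fin.cases with
  | zero => rw [V_coeff_zero, h]
  | succ j => rw [V_coeff_succ, TruncatedWittVector.coeff_mk]

theorem coeff_zero_out {n : ℕ} (x : TruncatedWittVector p (n + 1) S) :
    x.out.coeff 0 = x.coeff 0 := by
  simpa using TruncatedWittVector.coeff_out x 0

/-- `coeff 0` as a ring hom. -/
def c0 (n : ℕ) : TruncatedWittVector p (n + 1) S →+* S where
  toFun x := x.coeff 0
  map_zero' := by
    show (0 : TruncatedWittVector p (n + 1) S).coeff 0 = 0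
    simp
  map_one' := by
    show (1 : TruncatedWittVector p (n + 1) S).coeff 0 = 1
    rw [← WittVector.truncateFun_one p (n + 1) (R := S), WittVector.coeff_truncateFun]
    simp
  map_add' x y := by
    show (x + y).coeff 0 = x.coeff 0 + y.coeff 0
    have h : x + y = WittVector.truncateFun (n + 1) (x.out + y.out) := by
      rw [WittVector.truncateFun_add, truncateFun_out, truncateFun_out]
    rw [h, WittVector.coeff_truncateFun]
    simp [WittVector.add_coeff_zero, coeff_zero_out]
  map_mul' x y := by
    show (x * y).coeff 0 = x.coeff 0 * y.coeff 0
    have h : x * y = WittVector.truncateFun (n + 1) (x.out * y.out) := by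
      rw [WittVector.truncateFun_mul, truncateFun_out, truncateFun_out]
    rw [h, WittVector.coeff_truncateFun]
    simp [WittVector.mul_coeff_zero, coeff_zero_out]

@[simp] theorem c0_apply {n : ℕ} (x : TruncatedWittVector p (n + 1) S) :
    c0 n x = x.coeff 0 := rfl

@[simp] theorem c0_tm (n : ℕ) (x : S) : (TWV.tm p (n + 1) x).coeff 0 = x := by
  rw [TWV.tm, WittVector.coeff_truncateFun]
  simp

theorem tm_mul (n : ℕ) (x y : S) :
    TWV.tm p n (x * y) = TWV.tm p n x * TWV.tm p n y := by
  rw [TWV.tm, TWV.tm, TWV.tm, map_mul, WittVector.truncateFun_mul]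

theorem tm_zero (n : ℕ) : TWV.tm p n (0 : S) = 0 := by
  rw [TWV.tm, WittVector.teichmuller_zero]
  rfl

variable [CharP S p]

theorem frob_teich (x : S) :
    WittVector.frobenius (WittVector.teichmuller p x) = WittVector.teichmuller p (x ^ p) := by
  ext i
  rw [WittVector.coeff_frobenius_charP]
  cases i with
  | zero =>
    rw [WittVector.teichmuller_coeff_zero, WittVector.teichmuller_coeff_zero]
  | succ j =>
    rw [WittVector.teichmuller_coeff_pos p x _ (Nat.succ_pos j),
      WittVector.teichmuller_coeff_pos p (x ^ p) _ (Nat.succ_pos j),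
      zero_pow hp.out.ne_zero]

theorem F_truncateFun {n : ℕ} (w : WittVector p S) :
    TWV.F (WittVector.truncateFun n w) = WittVector.truncateFun n (WittVector.frobenius w) := by
  ext i
  rw [TWV.F, TruncatedWittVector.coeff_mk, WittVector.coeff_truncateFun,
    WittVector.coeff_truncateFun, WittVector.coeff_frobenius_charP]

/-- Frobenius as a ring hom on truncated Witt vectors. -/
def Fh (n : ℕ) : TruncatedWittVector p n S →+* TruncatedWittVector p n S where
  toFun := TWV.F
  map_zero' := by
    show TWV.F (0 : TruncatedWittVector p n S) = 0
    rw [← WittVector.truncateFun_zero p n (R := S), F_truncateFun, map_zero]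
  map_one' := by
    show TWV.F (1 : TruncatedWittVector p n S) = 1
    rw [← WittVector.truncateFun_one p n (R := S), F_truncateFun, map_one]
  map_add' x y := by
    show TWV.F (x + y) = TWV.F x + TWV.F y
    have h : x + y = WittVector.truncateFun n (x.out + y.out) := by
      rw [WittVector.truncateFun_add, truncateFun_out, truncateFun_out]
    rw [h, F_truncateFun, map_add, WittVector.truncateFun_add, ← F_truncateFun,
      ← F_truncateFun, truncateFun_out, truncateFun_out]
  map_mul' x y := by
    show TWV.F (x * y) = TWV.F x * TWV.F y
    have h : x * y = WittVector.truncateFun n (x.out * y.out) := by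
      rw [WittVector.truncateFun_mul, truncateFun_out, truncateFun_out]
    rw [h, F_truncateFun, map_mul, WittVector.truncateFun_mul, ← F_truncateFun,
      ← F_truncateFun, truncateFun_out, truncateFun_out]

theorem F_iter_eq_pow (n e : ℕ) :
    (TWV.F (p := p) (R := S) (n := n))^[e] = ⇑((Fh (p := p) (S := S) n) ^ e) := by
  induction e with
  | zero => simp
  | succ k ih =>
    funext x
    rw [Function.iterate_succ_apply, ih, pow_succ]
    rfl

theorem F_tm (n : ℕ) (x : S) : TWV.F (TWV.tm p n x) = TWV.tm p n (x ^ p) := by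
  rw [TWV.tm, F_truncateFun, frob_teich, TWV.tm]

theorem F_iter_tm (n e : ℕ) (x : S) :
    (TWV.F)^[e] (TWV.tm p n x) = TWV.tm p n (x ^ p ^ e) := by
  induction e with
  | zero => simp
  | succ k ih =>
    rw [Function.iterate_succ_apply', ih, F_tm, ← pow_mul, pow_succ]

theorem tm_mul_V {m : ℕ} (y : S) (β : TruncatedWittVector p m S) :
    TWV.tm p (m + 1) y * TWV.V β = TWV.V (TWV.tm p m (y ^ p) * β) := by
  have h1 : WittVector.truncateFun m (β.out * WittVector.teichmuller p (y ^ p))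
      = TWV.tm p m (y ^ p) * β := by
    rw [WittVector.truncateFun_mul, truncateFun_out, TWV.tm, mul_comm]
  rw [V_eq h1, ← frob_teich (p := p) y, WittVector.verschiebung_mul_frobenius,
    WittVector.truncateFun_mul, TWV.tm, TWV.V, mul_comm]

theorem exists_eta (m : ℕ) :
    ∃ η : TruncatedWittVector p m S, ∀ a : S,
      TWV.tm p (m + 1) a + TWV.tm p (m + 1) (-a) = TWV.V (η * TWV.tm p m (a ^ p)) := by
  obtain ⟨η, hη⟩ := exists_V_eq ((1 : TruncatedWittVector p (m + 1) S) + TWV.tm p (m + 1) (-1))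
    (by
      have h : ((1 : TruncatedWittVector p (m + 1) S) + TWV.tm p (m + 1) (-1)).coeff 0
          = c0 m (1 + TWV.tm p (m + 1) (-1)) := rfl
      rw [h, map_add, map_one, c0_apply, c0_tm]
      ring)
  refine ⟨η, fun a => ?_⟩
  have h2 : TWV.tm p (m + 1) (-a) = TWV.tm p (m + 1) (-1) * TWV.tm p (m + 1) a := by
    rw [← tm_mul]
    norm_num
  calc TWV.tm p (m + 1) a + TWV.tm p (m + 1) (-a)
      = (1 + TWV.tm p (m + 1) (-1)) * TWV.tm p (m + 1) a := by rw [h2]; ring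
    _ = TWV.tm p (m + 1) a * TWV.V η := by rw [hη, mul_comm]
    _ = TWV.V (TWV.tm p m (a ^ p) * η) := tm_mul_V a η
    _ = TWV.V (η * TWV.tm p m (a ^ p)) := by rw [mul_comm]

end TWVh

section Comb

open Finset

variable {S : Type*} [CommRing S]

theorem sum_pair_decomp {M : Type*} [AddCommMonoid M] {r : ℕ} (f : Fin r → Fin r → M)
    (hdiag : ∀ i, f i i = 0) :
    ∑ i, ∑ j, f i j = ∑ i, ∑ j, (if i < j then f i j + f j i else 0) := by
  have split : ∀ i j : Fin r, f i j =
      (if i < j then f i j else 0) + (if j < i then f i j else 0)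
        + (if i = j then f i j else 0) := by
    intro i j
    rcases lt_trichotomy i j with h | h | h
    · rw [if_pos h, if_neg (asymm h), if_neg (ne_of_lt h), add_zero, add_zero]
    · subst h
      rw [if_neg (lt_irrefl i), if_pos rfl, zero_add, zero_add]
    · rw [if_neg (asymm h), if_pos h, if_neg (Ne.symm (ne_of_lt h)), zero_add, add_zero]
  have hs1 : ∑ i, ∑ j, f i j
      = (∑ i, ∑ j, (if i < j then f i j else 0)) + (∑ i, ∑ j, (if j < i then f i j else 0))
        + (∑ i, ∑ j, (if i = j then f i j else 0)) := by
    rw [← Finset.sum_add_distrib, ← Finset.sum_add_distrib]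
    refine Finset.sum_congr rfl fun i _ => ?_
    rw [← Finset.sum_add_distrib, ← Finset.sum_add_distrib]
    exact Finset.sum_congr rfl fun j _ => split i j
  have hdiagsum : (∑ i : Fin r, ∑ j : Fin r, (if i = j then f i j else 0)) = 0 := by
    refine Finset.sum_eq_zero fun i _ => ?_
    rw [Finset.sum_ite_eq (Finset.univ : Finset (Fin r)) i (f i)]
    simp [hdiag]
  have hswap : (∑ i : Fin r, ∑ j : Fin r, (if j < i then f i j else 0))
      = ∑ i : Fin r, ∑ j : Fin r, (if i < j then f j i else 0) := Finset.sum_comm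
  have hrhs : ∑ i, ∑ j, (if i < j then f i j + f j i else 0)
      = (∑ i, ∑ j, (if i < j then f i j else 0)) + (∑ i, ∑ j, (if i < j then f j i else 0)) := by
    rw [← Finset.sum_add_distrib]
    refine Finset.sum_congr rfl fun i _ => ?_
    rw [← Finset.sum_add_distrib]
    refine Finset.sum_congr rfl fun j _ => ?_
    split_ifs <;> simp
  rw [hs1, hdiagsum, add_zero, hswap, hrhs]

theorem syzygy {r : ℕ} (y : Fin r → S)
    (hreg : ∀ (i : Fin r) (s : S), y i * s ∈ Ideal.span (y '' {j | j < i}) →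
      s ∈ Ideal.span (y '' {j | j < i}))
    (c : Fin r → S) (hc : ∑ i, c i * y i = 0) :
    ∃ a : Fin r → Fin r → S, (∀ i j, a j i = - a i j) ∧ (∀ i, a i i = 0) ∧
      (∀ i, c i = ∑ j, a i j * y j) := by
  induction r with
  | zero => exact ⟨0, fun i => i.elim0, fun i => i.elim0, fun i => i.elim0⟩
  | succ r IH =>
    have hsum := hc
    rw [Fin.sum_univ_castSucc] at hsum
    have hspan : Ideal.span (y '' {j | j < Fin.last r})
        = Ideal.span (Set.range fun i : Fin r => y i.castSucc) := by
      congr 1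
      ext v
      constructor
      · rintro ⟨j, hj, rfl⟩
        exact ⟨j.castPred (ne_of_lt hj), congrArg y (Fin.castSucc_castPred j (ne_of_lt hj))⟩
      · rintro ⟨i, rfl⟩
        exact ⟨i.castSucc, Fin.castSucc_lt_last i, rfl⟩
    have hyL : y (Fin.last r) * c (Fin.last r)
        ∈ Ideal.span (Set.range fun i : Fin r => y i.castSucc) := by
      have hh : y (Fin.last r) * c (Fin.last r)
          = -∑ i : Fin r, c i.castSucc * y i.castSucc := by
        rw [mul_comm]
        exact eq_neg_of_add_eq_zero_right hsum
      rw [hh]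
      exact neg_mem (Ideal.sum_mem _ fun i _ =>
        Ideal.mul_mem_left _ _ (Ideal.subset_span ⟨i, rfl⟩))
    have hcL : c (Fin.last r) ∈ Ideal.span (Set.range fun i : Fin r => y i.castSucc) := by
      rw [← hspan] at hyL ⊢
      exact hreg (Fin.last r) _ hyL
    obtain ⟨b, hb⟩ := Ideal.mem_span_range_iff_exists_fun.mp hcL
    set y' : Fin r → S := fun i => y i.castSucc with hy'
    set c' : Fin r → S := fun i => c i.castSucc + b i * y (Fin.last r) with hc'def
    have hreg' : ∀ (i : Fin r) (s : S), y' i * s ∈ Ideal.span (y' '' {j | j < i}) →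
        s ∈ Ideal.span (y' '' {j | j < i}) := by
      intro i s hs
      have himg : y' '' {j | j < i} = y '' {j | j < i.castSucc} := by
        ext v
        constructor
        · rintro ⟨j, hj, rfl⟩
          exact ⟨j.castSucc, by simpa [Fin.castSucc_lt_castSucc_iff] using hj, rfl⟩
        · rintro ⟨j, hj, rfl⟩
          have hne : j ≠ Fin.last r := ne_of_lt (lt_of_lt_of_le hj (Fin.le_last _))
          refine ⟨j.castPred hne, ?_, ?_⟩
          · have h2 : (j.castPred hne).castSucc < i.castSucc := by
              rwa [Fin.castSucc_castPred]
            exact Fin.castSucc_lt_castSucc_iff.mp h2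
          · exact congrArg y (Fin.castSucc_castPred j hne)
      rw [himg] at hs ⊢
      exact hreg i.castSucc s hs
    have hc'sum : ∑ i, c' i * y' i = 0 := by
      have hexp : ∑ i, c' i * y' i
          = ∑ i : Fin r, c i.castSucc * y i.castSucc
            + (∑ i : Fin r, b i * y i.castSucc) * y (Fin.last r) := by
        rw [Finset.sum_mul, ← Finset.sum_add_distrib]
        refine Finset.sum_congr rfl fun i _ => ?_
        simp only [hc'def, hy']
        ring
      rw [hexp, hb]
      exact hsum
    obtain ⟨a', ha'skew, ha'diag, ha'⟩ := IH y' hreg' c' hc'sum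
    refine ⟨fun i j => Fin.lastCases (Fin.lastCases 0 (fun j' => b j') j)
        (fun i' => Fin.lastCases (-(b i')) (fun j' => a' i' j') j) i, ?_, ?_, ?_⟩
    · intro i j
      induction i using Fin.lastCases with
      | last =>
        induction j using Fin.lastCases with
        | last => simp
        | cast j' => simp
      | cast i' =>
        induction j using Fin.lastCases with
        | last => simp
        | cast j' => simpa using ha'skew i' j'
    · intro i
      induction i using Fin.lastCases with
      | last => simp
      | cast i' => simpa using ha'diag i'
    · intro i
      induction i using Fin.lastCases with
      | last =>
        rw [Fin.sum_univ_castSucc]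
        simpa using hb.symm
      | cast i' =>
        rw [Fin.sum_univ_castSucc]
        simp only [Fin.lastCases_castSucc, Fin.lastCases_last]
        have h2 := ha' i'
        simp only [hc'def, hy'] at h2
        have : c i'.castSucc = (∑ j', a' i' j' * y j'.castSucc) - b i' * y (Fin.last r) := by
          rw [← h2]; ring
        rw [this]
        ring

theorem reg_prefix (l : List S) (hl : RingTheory.Sequence.IsWeaklyRegular S l)
    (k : ℕ) (hk : k < l.length) (s : S)
    (hs : l[k] * s ∈ Ideal.span {v | ∃ j, ∃ (_ : j < l.length), j < k ∧ v = l[j]}) :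
    s ∈ Ideal.span {v | ∃ j, ∃ (_ : j < l.length), j < k ∧ v = l[j]} := by
  have hset : {v | ∃ j, ∃ (_ : j < l.length), j < k ∧ v = l[j]} = {v | v ∈ l.take k} := by
    ext v
    simp only [Set.mem_setOf_eq]
    constructor
    · rintro ⟨j, hj, hjk, rfl⟩
      have hjt : j < (l.take k).length := by
        rw [List.length_take]; omega
      have he : (l.take k)[j]'hjt = l[j]'hj := List.getElem_take
      rw [← he]
      exact List.getElem_mem hjt
    · intro hv
      obtain ⟨j, hj, rfl⟩ := List.mem_iff_getElem.mp hv
      have hjl : j < l.length ∧ j < k := by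
        rw [List.length_take] at hj; omega
      exact ⟨j, hjl.1, hjl.2, List.getElem_take⟩
  rw [hset] at hs ⊢
  set I : Ideal S := Ideal.span {v | v ∈ l.take k} with hI
  have htop : (I • ⊤ : Submodule S S) = I := by
    apply le_antisymm
    · exact Submodule.smul_le.mpr fun r hr m _ => by
        simpa [smul_eq_mul] using I.mul_mem_right m hr
    · intro x hx
      simpa using Submodule.smul_mem_smul hx (Submodule.mem_top (x := (1 : S)))
  have hr := hl.regular_mod_prev k hk
  have h1 : l[k] • (Submodule.Quotient.mk s :
      S ⧸ (Ideal.ofList (l.take k) • ⊤ : Submodule S S)) = l[k] • (0 : _) := by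
    rw [smul_zero, ← Submodule.Quotient.mk_smul, Submodule.Quotient.mk_eq_zero]
    show l[k] • s ∈ (I • ⊤ : Submodule S S)
    rw [htop]
    simpa [smul_eq_mul] using hs
  have h2 := hr h1
  rw [show (0 : S ⧸ (Ideal.ofList (l.take k) • ⊤ : Submodule S S))
    = Submodule.Quotient.mk 0 from rfl] at h2
  have h3 : s - 0 ∈ (Ideal.ofList (l.take k) • ⊤ : Submodule S S) :=
    Submodule.Quotient.eq _ |>.mp h2
  rw [sub_zero] at h3
  have h4 : s ∈ (I • ⊤ : Submodule S S) := h3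
  rwa [htop] at h4

end Comb

section Main

open WittVector TruncatedWittVector Finset TWVh

variable {p : ℕ} [hp : Fact p.Prime] {S : Type*} [CommRing S] [CharP S p]

set_option linter.unusedSectionVars false

theorem span_image_F (m e : ℕ) (xs : List S) :
    Ideal.span (TWV.F^[e] '' (Ideal.span {α | ∃ x ∈ xs, α = TWV.tm p m x} :
        Ideal (TruncatedWittVector p m S))) =
    Ideal.span (Set.range fun i : Fin xs.length => TWV.tm p m (xs.get i ^ p ^ e)) := by
  have h1 : {α : TruncatedWittVector p m S | ∃ x ∈ xs, α = TWV.tm p m x}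
      = Set.range fun i : Fin xs.length => TWV.tm p m (xs.get i) := by
    ext α
    simp only [Set.mem_setOf_eq, Set.mem_range]
    constructor
    · rintro ⟨x, hx, rfl⟩
      obtain ⟨i, rfl⟩ := List.mem_iff_get.mp hx
      exact ⟨i, rfl⟩
    · rintro ⟨i, rfl⟩
      exact ⟨xs.get i, List.get_mem xs i, rfl⟩
  rw [F_iter_eq_pow]
  have h2 : Ideal.span ((⇑((Fh (p := p) (S := S) m) ^ e)) ''
      (Ideal.span {α | ∃ x ∈ xs, α = TWV.tm p m x} : Ideal (TruncatedWittVector p m S)))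
      = Ideal.map ((Fh (p := p) (S := S) m) ^ e)
          (Ideal.span {α | ∃ x ∈ xs, α = TWV.tm p m x}) := rfl
  rw [h2, Ideal.map_span, h1, ← Set.range_comp]
  have h3 : (⇑((Fh (p := p) (S := S) m) ^ e)) ∘ (fun i : Fin xs.length => TWV.tm p m (xs.get i))
      = fun i : Fin xs.length => TWV.tm p m (xs.get i ^ p ^ e) := by
    funext i
    rw [Function.comp_apply, ← F_iter_eq_pow, F_iter_tm]
  rw [h3]

theorem main1 (n : ℕ) {r : ℕ} (Y : Fin r → S)
    (hregY : ∀ (i : Fin r) (s : S), Y i * s ∈ Ideal.span (Y '' {j | j < i}) →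
      s ∈ Ideal.span (Y '' {j | j < i}))
    (β : TruncatedWittVector p (n + 1) S) :
    TWV.V β ∈ Ideal.span (Set.range fun i => TWV.tm p (n + 2) (Y i)) ↔
      β ∈ Ideal.span (Set.range fun i => TWV.tm p (n + 1) (Y i ^ p)) := by
  constructor
  · intro hmem
    obtain ⟨γ, hγ⟩ := Ideal.mem_span_range_iff_exists_fun.mp hmem
    have hc : ∑ i, (γ i).coeff 0 * Y i = 0 := by
      have h0 := congrArg (c0 (p := p) (S := S) (n + 1)) hγ
      rw [map_sum] at h0
      simpa only [map_mul, c0_apply, c0_tm, V_coeff_zero] using h0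
    obtain ⟨a, haskew, hadiag, ha⟩ := syzygy Y hregY _ hc
    have hδex : ∀ i, ∃ δ : TruncatedWittVector p (n + 1) S,
        TWV.V δ = γ i - ∑ j, TWV.tm p (n + 2) (a i j) * TWV.tm p (n + 2) (Y j) := by
      intro i
      apply exists_V_eq
      have h1 : ∀ z : TruncatedWittVector p (n + 2) S, z.coeff 0 = c0 (n + 1) z := fun _ => rfl
      rw [h1, map_sub, map_sum]
      simp only [map_mul, c0_apply, c0_tm]
      exact sub_eq_zero_of_eq (ha i)
    choose δ hδ using hδex
    obtain ⟨η, hη⟩ := exists_eta (p := p) (S := S) (n + 1)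
    have step1 : ∀ i, γ i * TWV.tm p (n + 2) (Y i)
        = TWV.V (TWV.tm p (n + 1) (Y i ^ p) * δ i)
          + ∑ j, TWV.tm p (n + 2) (a i j) * TWV.tm p (n + 2) (Y j) * TWV.tm p (n + 2) (Y i) := by
      intro i
      have hγi : γ i = TWV.V (δ i)
          + ∑ j, TWV.tm p (n + 2) (a i j) * TWV.tm p (n + 2) (Y j) := by
        rw [hδ i]; ring
      rw [hγi, add_mul, Finset.sum_mul]
      congr 1
      rw [mul_comm, tm_mul_V]
    have hVβ : TWV.V β = (∑ i, TWV.V (TWV.tm p (n + 1) (Y i ^ p) * δ i))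
        + ∑ i, ∑ j, TWV.tm p (n + 2) (a i j) * TWV.tm p (n + 2) (Y j) * TWV.tm p (n + 2) (Y i) := by
      calc TWV.V β = ∑ i, γ i * TWV.tm p (n + 2) (Y i) := hγ.symm
        _ = ∑ i, (TWV.V (TWV.tm p (n + 1) (Y i ^ p) * δ i)
              + ∑ j, TWV.tm p (n + 2) (a i j) * TWV.tm p (n + 2) (Y j) * TWV.tm p (n + 2) (Y i)) :=
            Finset.sum_congr rfl fun i _ => step1 i
        _ = _ := Finset.sum_add_distrib
    have hdiag : ∀ i, TWV.tm p (n + 2) (a i i) * TWV.tm p (n + 2) (Y i)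
        * TWV.tm p (n + 2) (Y i) = 0 := by
      intro i; rw [hadiag i, tm_zero, zero_mul, zero_mul]
    have hpair : ∀ i j, TWV.tm p (n + 2) (a i j) * TWV.tm p (n + 2) (Y j) * TWV.tm p (n + 2) (Y i)
        + TWV.tm p (n + 2) (a j i) * TWV.tm p (n + 2) (Y i) * TWV.tm p (n + 2) (Y j)
        = TWV.V (η * TWV.tm p (n + 1) (a i j ^ p)
            * (TWV.tm p (n + 1) (Y j ^ p) * TWV.tm p (n + 1) (Y i ^ p))) := by
      intro i j
      have h1 : TWV.tm p (n + 2) (a i j) * TWV.tm p (n + 2) (Y j) * TWV.tm p (n + 2) (Y i)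
          + TWV.tm p (n + 2) (a j i) * TWV.tm p (n + 2) (Y i) * TWV.tm p (n + 2) (Y j)
          = (TWV.tm p (n + 2) (a i j) + TWV.tm p (n + 2) (-(a i j)))
            * TWV.tm p (n + 2) (Y i * Y j) := by
        rw [haskew i j, tm_mul]; ring
      rw [h1, hη (a i j), mul_comm, tm_mul_V]
      congr 1
      rw [mul_pow, tm_mul]
      ring
    have hD : (∑ i, ∑ j, TWV.tm p (n + 2) (a i j) * TWV.tm p (n + 2) (Y j)
          * TWV.tm p (n + 2) (Y i))
        = TWV.V (∑ i, ∑ j, if i < j then η * TWV.tm p (n + 1) (a i j ^ p)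
            * (TWV.tm p (n + 1) (Y j ^ p) * TWV.tm p (n + 1) (Y i ^ p)) else 0) := by
      rw [sum_pair_decomp _ hdiag]
      simp only [V_sum]
      refine Finset.sum_congr rfl fun i _ => Finset.sum_congr rfl fun j _ => ?_
      split_ifs with h
      · exact hpair i j
      · exact V_zero.symm
    have hfinal : TWV.V β = TWV.V ((∑ i, TWV.tm p (n + 1) (Y i ^ p) * δ i)
        + ∑ i, ∑ j, if i < j then η * TWV.tm p (n + 1) (a i j ^ p)
            * (TWV.tm p (n + 1) (Y j ^ p) * TWV.tm p (n + 1) (Y i ^ p)) else 0) := by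
      rw [V_add, V_sum, ← hD]
      exact hVβ
    have hβeq := V_injective hfinal
    rw [hβeq]
    refine Ideal.add_mem _ (Ideal.sum_mem _ fun i _ => ?_)
      (Ideal.sum_mem _ fun i _ => Ideal.sum_mem _ fun j _ => ?_)
    · exact Ideal.mul_mem_right _ _ (Ideal.subset_span ⟨i, rfl⟩)
    · split_ifs
      · exact Ideal.mul_mem_left _ _ (Ideal.mul_mem_left _ _ (Ideal.subset_span ⟨i, rfl⟩))
      · exact Ideal.zero_mem _
  · intro hmem
    obtain ⟨δ', hδ'⟩ := Ideal.mem_span_range_iff_exists_fun.mp hmem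
    rw [← hδ', V_sum]
    refine Ideal.sum_mem _ fun i _ => ?_
    have h2 : TWV.V (δ' i * TWV.tm p (n + 1) (Y i ^ p))
        = TWV.tm p (n + 2) (Y i) * TWV.V (δ' i) := by
      rw [tm_mul_V, mul_comm]
    rw [h2]
    exact Ideal.mul_mem_right _ _ (Ideal.subset_span ⟨i, rfl⟩)

theorem main2 (n : ℕ) {r : ℕ} (Y : Fin r → S) (α : TruncatedWittVector p (n + 2) S) :
    α.coeff 0 ∈ Ideal.span (Set.range Y) ↔
      ∃ β : TruncatedWittVector p (n + 1) S,
        α - TWV.V β ∈ Ideal.span (Set.range fun i => TWV.tm p (n + 2) (Y i)) := by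
  constructor
  · intro hmem
    obtain ⟨s, hs⟩ := Ideal.mem_span_range_iff_exists_fun.mp hmem
    obtain ⟨β, hβ⟩ := exists_V_eq
      (α - ∑ i, TWV.tm p (n + 2) (s i) * TWV.tm p (n + 2) (Y i)) (by
        have h1 : ∀ z : TruncatedWittVector p (n + 2) S, z.coeff 0 = c0 (n + 1) z := fun _ => rfl
        rw [h1, map_sub, map_sum]
        simp only [map_mul, c0_apply, c0_tm]
        exact sub_eq_zero_of_eq hs.symm)
    refine ⟨β, ?_⟩
    have h2 : α - TWV.V β = ∑ i, TWV.tm p (n + 2) (s i) * TWV.tm p (n + 2) (Y i) := by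
      rw [hβ]; ring
    rw [h2]
    exact Ideal.sum_mem _ fun i _ => Ideal.mul_mem_left _ _ (Ideal.subset_span ⟨i, rfl⟩)
  · rintro ⟨β, hβ⟩
    obtain ⟨γ, hγ⟩ := Ideal.mem_span_range_iff_exists_fun.mp hβ
    refine Ideal.mem_span_range_iff_exists_fun.mpr ⟨fun i => (γ i).coeff 0, ?_⟩
    have h0 := congrArg (c0 (p := p) (S := S) (n + 1)) hγ
    rw [map_sum, map_sub] at h0
    simpa only [map_mul, c0_apply, c0_tm, V_coeff_zero, sub_zero] using h0

end Main


/-- Short exact sequence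
`0 → W_{n-1}(S)/I_{n-1}^{[p^{e+1}]} → W_n(S)/I_n^{[p^e]} → S/I_1^{[p^e]} → 0`
for Teichmüller ideals of a regular sequence (expressed via preimages). -/
theorem stmt5 {p : ℕ} [Fact p.Prime] {R : Type*} [CommRing R]
    [IsNoetherianRing R] [CharP R p] {S : Type*} [CommRing S] [Algebra R S]
    [CharP S p] (n e : ℕ) (xs : List S)
    (hreg : ∀ e : ℕ, RingTheory.Sequence.IsRegular S (xs.map (· ^ p ^ e))) :
    (∀ β : TruncatedWittVector p (n + 1) S,
      TWV.V β ∈ Ideal.span (TWV.F^[e] ''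
          (Ideal.span {α | ∃ x ∈ xs, α = TWV.tm p (n + 2) x} :
            Ideal (TruncatedWittVector p (n + 2) S))) ↔
      β ∈ Ideal.span (TWV.F^[e + 1] ''
          (Ideal.span {α | ∃ x ∈ xs, α = TWV.tm p (n + 1) x} :
            Ideal (TruncatedWittVector p (n + 1) S)))) ∧
    (∀ α : TruncatedWittVector p (n + 2) S,
      α.coeff 0 ∈ Ideal.span {y : S | ∃ x ∈ xs, y = x ^ p ^ e} ↔
      ∃ β : TruncatedWittVector p (n + 1) S,
        α - TWV.V β ∈ Ideal.span (TWV.F^[e] ''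
          (Ideal.span {α | ∃ x ∈ xs, α = TWV.tm p (n + 2) x} :
            Ideal (TruncatedWittVector p (n + 2) S)))) ∧
    Function.Surjective (fun α : TruncatedWittVector p (n + 2) S => α.coeff 0) := by
  have hYp : ∀ i : Fin xs.length, (xs.get i ^ p ^ e) ^ p = xs.get i ^ p ^ (e + 1) := by
    intro i; rw [← pow_mul, pow_succ]
  have hrangeYp : (Set.range fun i : Fin xs.length =>
        TWV.tm p (n + 1) ((xs.get i ^ p ^ e) ^ p))
      = Set.range fun i : Fin xs.length => TWV.tm p (n + 1) (xs.get i ^ p ^ (e + 1)) := by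
    have h : (fun i : Fin xs.length => TWV.tm p (n + 1) ((xs.get i ^ p ^ e) ^ p))
        = fun i => TWV.tm p (n + 1) (xs.get i ^ p ^ (e + 1)) := funext fun i => by rw [hYp i]
    rw [h]
  have hsetS : {y : S | ∃ x ∈ xs, y = x ^ p ^ e}
      = Set.range fun i : Fin xs.length => xs.get i ^ p ^ e := by
    ext v
    simp only [Set.mem_setOf_eq, Set.mem_range]
    constructor
    · rintro ⟨x, hx, rfl⟩
      obtain ⟨i, rfl⟩ := List.mem_iff_get.mp hx
      exact ⟨i, rfl⟩
    · rintro ⟨i, rfl⟩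
      exact ⟨xs.get i, List.get_mem xs i, rfl⟩
  have hregY : ∀ (i : Fin xs.length) (s : S),
      (fun j : Fin xs.length => xs.get j ^ p ^ e) i * s
        ∈ Ideal.span ((fun j : Fin xs.length => xs.get j ^ p ^ e) '' {j | j < i}) →
      s ∈ Ideal.span ((fun j : Fin xs.length => xs.get j ^ p ^ e) '' {j | j < i}) := by
    intro i s hs
    have hlen : (xs.map (· ^ p ^ e)).length = xs.length := List.length_map _
    have hk : (i : ℕ) < (xs.map (· ^ p ^ e)).length := by rw [hlen]; exact i.isLt
    have hset : (fun j : Fin xs.length => xs.get j ^ p ^ e) '' {j | j < i}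
        = {v | ∃ j, ∃ (_ : j < (xs.map (· ^ p ^ e)).length), j < (i : ℕ)
            ∧ v = (xs.map (· ^ p ^ e))[j]} := by
      ext v
      constructor
      · rintro ⟨j, hj, rfl⟩
        refine ⟨(j : ℕ), by rw [hlen]; exact j.isLt, hj, ?_⟩
        rw [List.getElem_map]
        simp [List.get_eq_getElem]
      · rintro ⟨j, hj, hjk, rfl⟩
        have hj' : j < xs.length := by rwa [hlen] at hj
        refine ⟨⟨j, hj'⟩, hjk, ?_⟩
        rw [List.getElem_map]
        simp [List.get_eq_getElem]
    have hgl : (xs.map (· ^ p ^ e))[(i : ℕ)]'hk = xs.get i ^ p ^ e := by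
      rw [List.getElem_map]
      simp [List.get_eq_getElem]
    rw [hset] at hs ⊢
    refine reg_prefix _ (hreg e).toIsWeaklyRegular (i : ℕ) hk s ?_
    rw [hgl]
    exact hs
  refine ⟨fun β => ?_, fun α => ?_, fun s => ⟨TWV.tm p (n + 2) s, TWVh.c0_tm (n + 1) s⟩⟩
  · rw [span_image_F (p := p) (n + 2) e xs, span_image_F (p := p) (n + 1) (e + 1) xs,
      ← hrangeYp]
    exact main1 n (fun i => xs.get i ^ p ^ e) hregY β
  · rw [hsetS, span_image_F (p := p) (n + 2) e xs]
    exact main2 n (fun i => xs.get i ^ p ^ e) α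
end
end

section
/- Let R be a reduced Noetherian ring of characteristic p > 0, and let I ⊆ J be ideals of W_n(R). Then the tight closures satisfy I* ⊆ J*, (I*)^{[p]} ⊆ (I^{[p]})*, and if β ∈ W_{n-1}(R) satisfies β ∈ (I_{n-1}^{[p]})* (with respect to an ideal I_{n-1} of W_{n-1}(R) generated by a fixed set of elements whose images generate I in W_n(R) via V-compatibility), then V(β) ∈ I*. Concretely: if there exists a nonzerodivisor c' ∈ R with [c']·F^e(β) ∈ I_{n-1}^{[p^{e+1}]} for all e ≥ 0, where I_{n-1} = (R(α_1),…,R(α_r)) and I = (α_1,…,α_r) ⊆ W_n(R), then [c'^p]·F^e(V(β)) ∈ I^{[p^e]} for all e ≥ 0, so V(β) ∈ I*. -/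
noncomputable section

namespace TWV

variable {p : ℕ} [hp : Fact p.Prime] {R : Type*} [CommRing R] [CharP R p] {n m : ℕ}

open WittVector

lemma coeff_F (x : TruncatedWittVector p n R) (i : Fin n) :
    (TWV.F x).coeff i = x.coeff i ^ p :=
  TruncatedWittVector.coeff_mk _ _

lemma truncateFun_eq (x : WittVector p R) :
    WittVector.truncateFun n x = WittVector.truncate n x := rfl

lemma truncate_frobenius (x : WittVector p R) :
    WittVector.truncate n (WittVector.frobenius x) = TWV.F (WittVector.truncate n x) := by
  apply TruncatedWittVector.ext
  intro i
  rw [coeff_F, WittVector.coeff_truncate, WittVector.coeff_truncate, coeff_frobenius_charP]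

lemma V_truncate (X : WittVector p R) :
    TWV.V (WittVector.truncate m X) =
      WittVector.truncate (m + 1) (WittVector.verschiebung X) := by
  apply TruncatedWittVector.ext
  intro i
  show (WittVector.truncateFun (m+1)
      (verschiebung (WittVector.truncate m X).out)).coeff i = _
  rw [WittVector.coeff_truncateFun, WittVector.coeff_truncate]
  rcases i with ⟨i, hi⟩
  cases i with
  | zero => rw [show ((⟨0, hi⟩ : Fin (m+1)) : ℕ) = 0 from rfl,
      verschiebung_coeff_zero, verschiebung_coeff_zero]
  | succ j =>
    rw [show ((⟨j+1, hi⟩ : Fin (m+1)) : ℕ) = j + 1 from rfl,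
      verschiebung_coeff_succ, verschiebung_coeff_succ]
    have hj : j < m := by omega
    have h1 := TruncatedWittVector.coeff_out (WittVector.truncate m X) ⟨j, hj⟩
    rw [show ((⟨j, hj⟩ : Fin m) : ℕ) = j from rfl] at h1
    rw [h1, WittVector.coeff_truncate]

/-- `TWV.F` as a ring homomorphism. -/
def Fhom (p : ℕ) [Fact p.Prime] (R : Type*) [CommRing R] [CharP R p] (n : ℕ) :
    TruncatedWittVector p n R →+* TruncatedWittVector p n R where
  toFun := TWV.F
  map_one' := by
    rw [show (1 : TruncatedWittVector p n R) = WittVector.truncate n 1 from (map_one _).symm,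
      ← truncate_frobenius, map_one, map_one]
  map_mul' x y := by
    show TWV.F _ = TWV.F _ * TWV.F _
    obtain ⟨X, rfl⟩ := WittVector.truncate_surjective p n R x
    obtain ⟨Y, rfl⟩ := WittVector.truncate_surjective p n R y
    rw [← map_mul, ← truncate_frobenius, ← truncate_frobenius, ← truncate_frobenius,
      ← map_mul, map_mul]
  map_zero' := by
    show TWV.F _ = _
    rw [show (0 : TruncatedWittVector p n R) = WittVector.truncate n 0 from (map_zero _).symm,
      ← truncate_frobenius, map_zero, map_zero]
  map_add' x y := by
    show TWV.F _ = TWV.F _ + TWV.F _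
    obtain ⟨X, rfl⟩ := WittVector.truncate_surjective p n R x
    obtain ⟨Y, rfl⟩ := WittVector.truncate_surjective p n R y
    rw [← map_add, ← truncate_frobenius, ← truncate_frobenius, ← truncate_frobenius,
      ← map_add, map_add]

lemma coe_Fhom : ⇑(Fhom p R n) = (TWV.F : TruncatedWittVector p n R → _) := rfl

lemma coe_Fhom_pow (e : ℕ) :
    ⇑(Fhom p R n ^ e) = (TWV.F^[e] : TruncatedWittVector p n R → _) := by
  rw [RingHom.coe_pow, coe_Fhom]

lemma span_F_iter_image_span (e : ℕ) (s : Set (TruncatedWittVector p n R)) :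
    Ideal.span (TWV.F^[e] '' ((Ideal.span s : Ideal _) : Set _)) =
      Ideal.span (TWV.F^[e] '' s) := by
  rw [← coe_Fhom_pow]
  rw [show Ideal.span (⇑(Fhom p R n ^ e) '' ((Ideal.span s : Ideal _) : Set _)) =
    Ideal.map (Fhom p R n ^ e) (Ideal.span s) from rfl, Ideal.map_span]

lemma mem_span_F_iter_image {e : ℕ} {s : Set (TruncatedWittVector p n R)}
    {x : TruncatedWittVector p n R} (hx : x ∈ Ideal.span s) :
    TWV.F^[e] x ∈ Ideal.span (TWV.F^[e] '' s) := by
  have h := Ideal.mem_map_of_mem (Fhom p R n ^ e) hx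
  rw [Ideal.map_span, coe_Fhom_pow] at h
  exact h

lemma tm_mul (a b : R) : tm p n (a * b) = tm p n a * tm p n b := by
  unfold TWV.tm
  rw [map_mul, truncateFun_eq, truncateFun_eq, truncateFun_eq, map_mul]

lemma tm_one : tm p n (1 : R) = 1 := by
  unfold TWV.tm
  rw [map_one, truncateFun_eq, map_one]

lemma F_tm (a : R) : TWV.F (tm p n a) = tm p n (a ^ p) := by
  unfold TWV.tm
  rw [truncateFun_eq, truncateFun_eq, ← truncate_frobenius, frobenius_eq_map_frobenius,
    map_teichmuller]
  rfl

lemma truncate_tm (a : R) :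
    TruncatedWittVector.truncate (Nat.le_succ m) (tm p (m + 1) a) = tm p m a := by
  unfold TWV.tm
  rw [truncateFun_eq, truncateFun_eq, TruncatedWittVector.truncate_wittVector_truncate]

lemma truncate_F {hm : m ≤ m + 1} (x : TruncatedWittVector p (m + 1) R) :
    TruncatedWittVector.truncate hm (TWV.F x) = TWV.F (TruncatedWittVector.truncate hm x) := by
  apply TruncatedWittVector.ext
  intro i
  rw [TruncatedWittVector.coeff_truncate, coeff_F, coeff_F, TruncatedWittVector.coeff_truncate]

lemma truncate_F_iter {hm : m ≤ m + 1} (e : ℕ) (x : TruncatedWittVector p (m + 1) R) :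
    TruncatedWittVector.truncate hm (TWV.F^[e] x) =
      TWV.F^[e] (TruncatedWittVector.truncate hm x) := by
  induction e with
  | zero => rfl
  | succ e ih =>
    rw [Function.iterate_succ_apply', truncate_F, ih, Function.iterate_succ_apply']

lemma F_V (x : TruncatedWittVector p m R) : TWV.F (TWV.V x) = TWV.V (TWV.F x) := by
  obtain ⟨X, rfl⟩ := WittVector.truncate_surjective p m R x
  rw [V_truncate, ← truncate_frobenius, ← truncate_frobenius, V_truncate,
    verschiebung_frobenius, frobenius_verschiebung]

lemma F_iter_V (e : ℕ) (x : TruncatedWittVector p m R) :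
    TWV.F^[e] (TWV.V x) = TWV.V (TWV.F^[e] x) := by
  induction e with
  | zero => rfl
  | succ e ih => rw [Function.iterate_succ_apply', ih, F_V, Function.iterate_succ_apply']

lemma V_zero : TWV.V (0 : TruncatedWittVector p m R) = 0 := by
  rw [show (0 : TruncatedWittVector p m R) = WittVector.truncate m 0 from (map_zero _).symm,
    V_truncate, map_zero, map_zero]

lemma V_add (x y : TruncatedWittVector p m R) : TWV.V (x + y) = TWV.V x + TWV.V y := by
  obtain ⟨X, rfl⟩ := WittVector.truncate_surjective p m R x
  obtain ⟨Y, rfl⟩ := WittVector.truncate_surjective p m R y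
  rw [← map_add, V_truncate, V_truncate, V_truncate, map_add, map_add]

lemma V_mul (a : TruncatedWittVector p m R) (y : TruncatedWittVector p (m + 1) R) :
    TWV.V a * y = TWV.V (a * TWV.F (TruncatedWittVector.truncate (Nat.le_succ m) y)) := by
  obtain ⟨X, rfl⟩ := WittVector.truncate_surjective p m R a
  obtain ⟨Y, rfl⟩ := WittVector.truncate_surjective p (m+1) R y
  rw [V_truncate, ← map_mul, ← verschiebung_mul_frobenius, ← V_truncate, map_mul,
    TruncatedWittVector.truncate_wittVector_truncate, truncate_frobenius]

lemma F_mul (x y : TruncatedWittVector p n R) : TWV.F (x * y) = TWV.F x * TWV.F y :=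
  map_mul (Fhom p R n) x y

lemma F_iter_zero (e : ℕ) : TWV.F^[e] (0 : TruncatedWittVector p n R) = 0 := by
  rw [← coe_Fhom_pow]; exact map_zero _

lemma F_iter_add (e : ℕ) (x y : TruncatedWittVector p n R) :
    TWV.F^[e] (x + y) = TWV.F^[e] x + TWV.F^[e] y := by
  rw [← coe_Fhom_pow]; exact map_add _ x y

lemma F_iter_mul (e : ℕ) (x y : TruncatedWittVector p n R) :
    TWV.F^[e] (x * y) = TWV.F^[e] x * TWV.F^[e] y := by
  rw [← coe_Fhom_pow]; exact map_mul _ x y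

lemma mem_span_F_image {s : Set (TruncatedWittVector p n R)} {x : TruncatedWittVector p n R}
    (hx : x ∈ Ideal.span s) : TWV.F x ∈ Ideal.span (TWV.F '' s) := by
  have h := Ideal.mem_map_of_mem (Fhom p R n) hx
  rw [Ideal.map_span, coe_Fhom] at h
  exact h

lemma V_mul_mem {m r : ℕ} (α : Fin r → TruncatedWittVector p (m + 1) R) (e : ℕ)
    (x : TruncatedWittVector p m R)
    (hx : x ∈ Ideal.span (Set.range fun i =>
      TWV.F^[e + 1] (TruncatedWittVector.truncate (Nat.le_succ m) (α i))))
    (z : TruncatedWittVector p m R) :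
    TWV.V (z * x) ∈ Ideal.span (TWV.F^[e] ''
      (Ideal.span (Set.range α) : Ideal (TruncatedWittVector p (m + 1) R))) := by
  revert z
  refine Submodule.span_induction ?_ ?_ ?_ ?_ hx
  · rintro x ⟨i, rfl⟩ z
    beta_reduce
    rw [Function.iterate_succ_apply', ← truncate_F_iter, ← V_mul]
    exact Ideal.mul_mem_left _ _
      (Ideal.subset_span ⟨α i, Ideal.subset_span ⟨i, rfl⟩, rfl⟩)
  · intro z
    rw [mul_zero, V_zero]
    exact zero_mem _
  · intro x y _ _ ihx ihy z
    rw [mul_add, V_add]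
    exact add_mem (ihx z) (ihy z)
  · intro a x _ ihx z
    rw [smul_eq_mul, ← mul_assoc]
    exact ihx (z * a)

end TWV



/-- Monotonicity of Witt tight closure, compatibility with Frobenius powers,
and the Verschiebung statement: if `[c']·F^e(β) ∈ I_{n-1}^{[p^{e+1}]}` for all
`e` with `c'` a nonzerodivisor, where `I_{n-1}` is generated by the
restrictions of the generators of `I`, then `[c'^p]·F^e(V(β)) ∈ I^{[p^e]}`
for all `e`, hence `V(β) ∈ I*`. -/
theorem stmt9 {p : ℕ} [Fact p.Prime] {R : Type*} [CommRing R]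
    [IsNoetherianRing R] [IsReduced R] [CharP R p] (m : ℕ) :
    (∀ I J : Ideal (TruncatedWittVector p (m + 1) R), I ≤ J →
      TWV.star I ⊆ TWV.star J) ∧
    (∀ I : Ideal (TruncatedWittVector p (m + 1) R),
      (Ideal.span (TWV.F '' TWV.star I) : Set (TruncatedWittVector p (m + 1) R)) ⊆
        TWV.star (Ideal.span (TWV.F '' I))) ∧
    (∀ (r : ℕ) (α : Fin r → TruncatedWittVector p (m + 1) R)
      (β : TruncatedWittVector p m R) (c' : R), c' ∈ nonZeroDivisors R →
      (∀ e : ℕ, TWV.tm p m c' * TWV.F^[e] β ∈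
        Ideal.span (TWV.F^[e + 1] ''
          (Ideal.span (Set.range fun i =>
            TruncatedWittVector.truncate (by omega) (α i)) :
              Ideal (TruncatedWittVector p m R)))) →
      (∀ e : ℕ, TWV.tm p (m + 1) (c' ^ p) * TWV.F^[e] (TWV.V β) ∈
        Ideal.span (TWV.F^[e] ''
          (Ideal.span (Set.range α) : Ideal (TruncatedWittVector p (m + 1) R)))) ∧
      TWV.V β ∈ TWV.star (Ideal.span (Set.range α))) := by
  have hp := (Fact.out : p.Prime)
  refine ⟨?_, ?_, ?_⟩
  · rintro I J hIJ x ⟨c, hc, hx⟩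
    exact ⟨c, hc, fun e => Ideal.span_mono (Set.image_mono hIJ) (hx e)⟩
  · intro I x hx
    refine Submodule.span_induction ?_ ?_ ?_ ?_ hx
    · rintro _ ⟨a, ha, rfl⟩
      obtain ⟨c, hc, hce⟩ := ha
      refine ⟨c ^ p, pow_mem hc p, fun e => ?_⟩
      have h1 : TWV.tm p (m + 1) (c ^ p) * TWV.F^[e] (TWV.F a) =
          TWV.F (TWV.tm p (m + 1) c * TWV.F^[e] a) := by
        rw [TWV.F_mul, TWV.F_tm, ← Function.iterate_succ_apply' TWV.F,
          Function.iterate_succ_apply]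
      have h2 := TWV.mem_span_F_image (hce e)
      rw [← h1] at h2
      have hset : TWV.F '' (TWV.F^[e] '' (I : Set (TruncatedWittVector p (m + 1) R))) =
          TWV.F^[e] '' (TWV.F '' (I : Set (TruncatedWittVector p (m + 1) R))) := by
        rw [← Set.image_comp, ← Set.image_comp, ← Function.iterate_succ,
          ← Function.iterate_succ']
      rw [TWV.span_F_iter_image_span, ← hset]
      exact h2
    · exact ⟨1, one_mem _, fun e => by
        rw [TWV.F_iter_zero, mul_zero]; exact zero_mem _⟩
    · rintro x y _ _ ⟨c, hc, hcx⟩ ⟨d, hd, hdy⟩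
      refine ⟨c * d, mul_mem hc hd, fun e => ?_⟩
      have : TWV.tm p (m + 1) (c * d) * TWV.F^[e] (x + y) =
          TWV.tm p (m + 1) d * (TWV.tm p (m + 1) c * TWV.F^[e] x) +
            TWV.tm p (m + 1) c * (TWV.tm p (m + 1) d * TWV.F^[e] y) := by
        rw [TWV.F_iter_add, TWV.tm_mul]; ring
      rw [this]
      exact add_mem (Ideal.mul_mem_left _ _ (hcx e)) (Ideal.mul_mem_left _ _ (hdy e))
    · rintro a x _ ⟨c, hc, hcx⟩
      refine ⟨c, hc, fun e => ?_⟩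
      have : TWV.tm p (m + 1) c * TWV.F^[e] (a • x) =
          TWV.F^[e] a * (TWV.tm p (m + 1) c * TWV.F^[e] x) := by
        rw [smul_eq_mul, TWV.F_iter_mul]; ring
      rw [this]
      exact Ideal.mul_mem_left _ _ (hcx e)
  · intro r α β c' hc' Hβ
    have key : ∀ e : ℕ, TWV.tm p (m + 1) (c' ^ p) * TWV.F^[e] (TWV.V β) ∈
        Ideal.span (TWV.F^[e] ''
          (Ideal.span (Set.range α) : Ideal (TruncatedWittVector p (m + 1) R))) := by
      intro e
      have h0 := Hβ e
      rw [TWV.span_F_iter_image_span, ← Set.range_comp] at h0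
      have hppos : 0 < p * p := Nat.mul_pos hp.pos hp.pos
      have hpp : (c' ^ p) ^ p = c' ^ (p * p - 1) * c' := by
        rw [← pow_mul, ← pow_succ, Nat.sub_add_cancel hppos]
      have hcalc : TWV.tm p (m + 1) (c' ^ p) * TWV.F^[e] (TWV.V β) =
          TWV.V (TWV.tm p m (c' ^ (p * p - 1)) * (TWV.tm p m c' * TWV.F^[e] β)) := by
        rw [TWV.F_iter_V, mul_comm (TWV.tm p (m + 1) (c' ^ p)), TWV.V_mul,
          TWV.truncate_tm, TWV.F_tm, hpp, TWV.tm_mul]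
        ring_nf
      rw [hcalc]
      exact TWV.V_mul_mem α e _ h0 _
    exact ⟨key, c' ^ p, pow_mem hc' p, key⟩
end
end

section
/- Let R be a commutative ring of characteristic p > 0 and let x ∈ R be such that x^{p^e} is a nonzerodivisor on R for all e ≥ 0. Then the Teichmüller lift [x] ∈ W_n(R) is a nonzerodivisor on W_n(R) for every n ≥ 1. -/
noncomputable section

namespace TWVAux

variable {p : ℕ} [hp : Fact p.Prime] {R : Type*} [CommRing R]

lemma frobenius_teichmuller [CharP R p] (x : R) :
    WittVector.frobenius (WittVector.teichmuller p x) = WittVector.teichmuller p (x ^ p) := by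
  ext i
  rw [WittVector.coeff_frobenius_charP]
  cases i with
  | zero => rw [WittVector.teichmuller_coeff_zero, WittVector.teichmuller_coeff_zero]
  | succ j =>
      rw [WittVector.teichmuller_coeff_pos _ _ _ (Nat.succ_pos j),
        WittVector.teichmuller_coeff_pos _ _ _ (Nat.succ_pos j),
        zero_pow hp.out.ne_zero]

/-- Decomposition `y = [y₀] + V w`. -/
lemma teichmuller_add_verschiebung (y : WittVector p R) :
    y = WittVector.teichmuller p (y.coeff 0) +
      WittVector.verschiebung (WittVector.mk p fun j => y.coeff (j + 1)) := by
  have hdisj : ∀ m, (WittVector.teichmuller p (y.coeff 0)).coeff m = 0 ∨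
      (WittVector.verschiebung (WittVector.mk p fun j => y.coeff (j + 1))).coeff m = 0 := by
    intro m
    cases m with
    | zero => exact Or.inr (WittVector.verschiebung_coeff_zero _)
    | succ j => exact Or.inl (WittVector.teichmuller_coeff_pos _ _ _ (Nat.succ_pos j))
  ext m
  rw [WittVector.coeff_add_of_disjoint _ _ _ hdisj]
  cases m with
  | zero =>
      rw [WittVector.teichmuller_coeff_zero, WittVector.verschiebung_coeff_zero, add_zero]
  | succ j =>
      rw [WittVector.teichmuller_coeff_pos _ _ _ (Nat.succ_pos j),
        WittVector.verschiebung_coeff_succ, WittVector.coeff_mk, zero_add]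

/-- Key coefficient formula: `([x] * y).coeff i = x ^ p ^ i * y.coeff i` in char `p`. -/
lemma teichmuller_mul_coeff [CharP R p] :
    ∀ (i : ℕ) (x : R) (y : WittVector p R),
      (WittVector.teichmuller p x * y).coeff i = x ^ p ^ i * y.coeff i := by
  intro i
  induction i with
  | zero =>
      intro x y
      rw [WittVector.mul_coeff_zero, WittVector.teichmuller_coeff_zero, pow_zero, pow_one]
  | succ i ih =>
      intro x y
      set w : WittVector p R := WittVector.mk p fun j => y.coeff (j + 1) with hw
      have hdecomp := teichmuller_add_verschiebung y
      have hproj : WittVector.teichmuller p x * WittVector.verschiebung w =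
          WittVector.verschiebung (w * WittVector.teichmuller p (x ^ p)) := by
        rw [← frobenius_teichmuller, WittVector.verschiebung_mul_frobenius, mul_comm]
      calc (WittVector.teichmuller p x * y).coeff (i + 1)
          = (WittVector.teichmuller p (x * y.coeff 0) +
              WittVector.verschiebung (w * WittVector.teichmuller p (x ^ p))).coeff (i + 1) := by
            conv_lhs => rw [hdecomp]
            rw [mul_add, ← map_mul, hproj]
        _ = (WittVector.verschiebung (w * WittVector.teichmuller p (x ^ p))).coeff (i + 1) := by
            rw [WittVector.coeff_add_of_disjoint]
            · rw [WittVector.teichmuller_coeff_pos _ _ _ (Nat.succ_pos i), zero_add]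
            · intro m
              cases m with
              | zero => exact Or.inr (WittVector.verschiebung_coeff_zero _)
              | succ j => exact Or.inl (WittVector.teichmuller_coeff_pos _ _ _ (Nat.succ_pos j))
        _ = x ^ p ^ (i + 1) * y.coeff (i + 1) := by
            rw [WittVector.verschiebung_coeff_succ, mul_comm w, ih (x ^ p) w, hw,
              WittVector.coeff_mk, ← pow_mul, ← pow_succ']

end TWVAux

/-- If `x^{p^e}` is a nonzerodivisor on `R` for all `e ≥ 0`, then the
Teichmüller lift `[x]` is a nonzerodivisor on `W_n(R)` for every `n ≥ 1`. -/
theorem stmt12 {p : ℕ} [Fact p.Prime] {R : Type*} [CommRing R] [CharP R p]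
    (x : R) (hx : ∀ e : ℕ, x ^ p ^ e ∈ nonZeroDivisors R)
    (n : ℕ) (hn : 1 ≤ n) :
    TWV.tm p n x ∈ nonZeroDivisors (TruncatedWittVector p n R) := by
  rw [mem_nonZeroDivisors_iff_right]
  intro α hα
  have hα' : WittVector.truncate n (WittVector.teichmuller p x * α.out) = 0 := by
    rw [map_mul]
    have h1 : WittVector.truncate n (WittVector.teichmuller p x) = TWV.tm p n x := rfl
    have h2 : WittVector.truncate n (α.out) = α :=
      TruncatedWittVector.truncateFun_out α
    rw [h1, h2, mul_comm]
    exact hα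
  rw [← RingHom.mem_ker, WittVector.mem_ker_truncate] at hα'
  ext i
  have := hα' i i.isLt
  rw [TWVAux.teichmuller_mul_coeff] at this
  have hcoeff : α.out.coeff i = 0 := (mem_nonZeroDivisors_iff_right.mp (hx i)) _ (by rwa [mul_comm] at this)
  rw [TruncatedWittVector.coeff_zero, ← TruncatedWittVector.coeff_out, hcoeff]
end
end

section
/- Let R be a commutative ring of characteristic p > 0 and let x_1, …, x_r ∈ R be such that x_1^{p^e}, …, x_r^{p^e} is a regular sequence on R for all e ≥ 0. Then [x_1], …, [x_r] is a regular sequence on W_n(R) for every n ≥ 1. -/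
noncomputable section

open WittVector TruncatedWittVector RingTheory.Sequence

section TWVAuxSec
namespace TWVAux
variable {p : ℕ} [hp : Fact p.Prime] {R : Type*} [CommRing R] {n : ℕ}

lemma trunc_out (x : TruncatedWittVector p n R) : WittVector.truncate n x.out = x :=
  truncateFun_out x

/-- zeroth coefficient as a ring hom -/
def c0 : TruncatedWittVector p (n + 1) R →+* R where
  toFun x := x.coeff 0
  map_one' := by
    have : (1 : TruncatedWittVector p (n+1) R) = WittVector.truncate (n+1) 1 := (map_one _).symm
    show TruncatedWittVector.coeff 0 (1 : TruncatedWittVector p (n+1) R) = 1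
    rw [this, WittVector.coeff_truncate]
    simpa using WittVector.one_coeff_zero (p := p) (R := R)
  map_mul' x y := by
    have : x * y = WittVector.truncate (n+1) (x.out * y.out) := by
      rw [map_mul, trunc_out, trunc_out]
    show TruncatedWittVector.coeff 0 (x * y) = _
    rw [this, WittVector.coeff_truncate]
    show (x.out * y.out).coeff 0 = _
    rw [WittVector.mul_coeff_zero]
    have hx : x.out.coeff 0 = TruncatedWittVector.coeff 0 x := coeff_out x 0
    have hy : y.out.coeff 0 = TruncatedWittVector.coeff 0 y := coeff_out y 0
    rw [hx, hy]
  map_zero' := by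
    have : (0 : TruncatedWittVector p (n+1) R) = WittVector.truncate (n+1) 0 := (map_zero _).symm
    show TruncatedWittVector.coeff 0 (0 : TruncatedWittVector p (n+1) R) = 0
    rw [this, WittVector.coeff_truncate]
    simp
  map_add' x y := by
    have : x + y = WittVector.truncate (n+1) (x.out + y.out) := by
      rw [map_add, trunc_out, trunc_out]
    show TruncatedWittVector.coeff 0 (x + y) = _
    rw [this, WittVector.coeff_truncate]
    show (x.out + y.out).coeff 0 = _
    rw [WittVector.add_coeff_zero]
    have hx : x.out.coeff 0 = TruncatedWittVector.coeff 0 x := coeff_out x 0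
    have hy : y.out.coeff 0 = TruncatedWittVector.coeff 0 y := coeff_out y 0
    rw [hx, hy]

lemma c0_truncate (a : WittVector p R) : c0 (WittVector.truncate (n+1) a) = a.coeff 0 := by
  show (WittVector.truncate (n+1) a).coeff 0 = a.coeff 0
  rw [WittVector.coeff_truncate]; rfl

lemma tm_eq (x : R) : TWV.tm p n x = WittVector.truncate n (teichmuller p x) := rfl

lemma c0_tm (x : R) : c0 (TWV.tm p (n+1) x) = x := by
  rw [tm_eq, c0_truncate, teichmuller_coeff_zero]

lemma tm_mul (x y : R) : TWV.tm p n (x * y) = TWV.tm p n x * TWV.tm p n y := by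
  simp [tm_eq, ← map_mul]

lemma tm_one : TWV.tm p n (1 : R) = 1 := by simp [tm_eq]

lemma V_truncate (a : WittVector p R) :
    TWV.V (WittVector.truncate n a) = WittVector.truncate (n+1) (verschiebung a) := by
  show WittVector.truncate (n+1) (verschiebung (WittVector.truncate n a).out)
      = WittVector.truncate (n+1) (verschiebung a)
  ext i
  rw [WittVector.coeff_truncate, WittVector.coeff_truncate]
  rcases i with ⟨iv, hi⟩
  cases iv with
  | zero => simp [verschiebung_coeff_zero]
  | succ j =>
    have hj : j < n := Nat.succ_lt_succ_iff.mp hi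
    show (verschiebung _).coeff (j+1) = (verschiebung a).coeff (j+1)
    rw [verschiebung_coeff_succ, verschiebung_coeff_succ]
    have h1 : (verschiebung ((WittVector.truncate n) a).out).coeff (j+1)
        = ((WittVector.truncate n) a).out.coeff j := verschiebung_coeff_succ _ j
    have h2 : ((WittVector.truncate n) a).out.coeff j
        = TruncatedWittVector.coeff ⟨j, hj⟩ ((WittVector.truncate n) a) :=
      coeff_out ((WittVector.truncate n) a) ⟨j, hj⟩
    rw [h2, WittVector.coeff_truncate]

lemma V_add (x y : TruncatedWittVector p n R) : TWV.V (x + y) = TWV.V x + TWV.V y := by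
  have hx := trunc_out x; have hy := trunc_out y
  rw [← hx, ← hy, ← map_add, V_truncate, V_truncate, V_truncate, ← map_add, ← map_add]

lemma V_zero : TWV.V (0 : TruncatedWittVector p n R) = 0 := by
  rw [← (map_zero (WittVector.truncate n)), V_truncate]; simp

/-- V as an additive monoid hom -/
def Vhom : TruncatedWittVector p n R →+ TruncatedWittVector p (n+1) R where
  toFun := TWV.V
  map_zero' := V_zero
  map_add' := V_add

lemma c0_V (x : TruncatedWittVector p n R) : c0 (TWV.V x) = 0 := by
  rw [← trunc_out x, V_truncate, c0_truncate, verschiebung_coeff_zero]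

lemma V_coeff_succ (x : TruncatedWittVector p n R) (j : ℕ) (hj : j < n) :
    (TWV.V x).coeff ⟨j+1, Nat.succ_lt_succ hj⟩ = x.coeff ⟨j, hj⟩ := by
  rw [← trunc_out x, V_truncate, WittVector.coeff_truncate]
  show (verschiebung x.out).coeff (j+1) = _
  rw [verschiebung_coeff_succ]
  exact (WittVector.coeff_truncate x.out ⟨j, hj⟩).symm

lemma V_injective : Function.Injective (TWV.V : TruncatedWittVector p n R → _) := by
  intro x y hxy
  ext ⟨j, hj⟩
  rw [← V_coeff_succ x j hj, ← V_coeff_succ y j hj, hxy]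

lemma exists_V (x : TruncatedWittVector p (n+1) R) (h : c0 x = 0) :
    ∃ y : TruncatedWittVector p n R, x = TWV.V y := by
  refine ⟨WittVector.truncate n (WittVector.mk p fun i => x.out.coeff (i+1)), ?_⟩
  rw [V_truncate]
  have hc : c0 x = x.out.coeff 0 := by
    conv_lhs => rw [← trunc_out x]
    rw [c0_truncate]
  have hv : verschiebung (WittVector.mk p fun i => x.out.coeff (i+1)) = x.out := by
    ext k
    cases k with
    | zero => rw [verschiebung_coeff_zero, ← hc, h]
    | succ j => rw [verschiebung_coeff_succ]; rfl
  rw [hv, trunc_out]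

lemma tm_mul_V [CharP R p] (x : R) (α : TruncatedWittVector p n R) :
    TWV.tm p (n+1) x * TWV.V α = TWV.V (TWV.tm p n (x ^ p) * α) := by
  rw [← trunc_out α, V_truncate, tm_eq, ← map_mul]
  have key : teichmuller p x * verschiebung α.out
      = verschiebung (α.out * teichmuller p (x ^ p)) := by
    rw [mul_comm, ← verschiebung_mul_frobenius]
    congr 1
    rw [frobenius_eq_map_frobenius, map_teichmuller]
    rfl
  rw [key, ← V_truncate, map_mul, trunc_out, tm_eq, mul_comm]

end TWVAux
section Ideals
open WittVector TruncatedWittVector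
namespace TWVAux
variable {p : ℕ} [hp : Fact p.Prime] {R : Type*} [CommRing R] {n : ℕ}

lemma mem_ofList_iff {A : Type*} [CommRing A] (L : List A) (a : A) :
    a ∈ Ideal.ofList L ↔ ∃ c : Fin L.length → A, ∑ i, c i * L.get i = a := by
  have h : {r | r ∈ L} = Set.range L.get := by
    ext r; simp [List.mem_iff_get, Set.range, eq_comm]
  rw [Ideal.ofList, h]
  exact (Submodule.mem_span_range_iff_exists_fun (R := A)).trans (by simp [smul_eq_mul])

/-- The ideal generated by Teichmüller lifts of `p^e`-th powers. -/
def J (p : ℕ) [Fact p.Prime] {R : Type*} [CommRing R] (n e : ℕ) (l : List R) :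
    Ideal (TruncatedWittVector p n R) :=
  Ideal.ofList (l.map fun x => TWV.tm p n (x ^ p ^ e))

lemma tm_mem_J {e : ℕ} {l : List R} {x : R} (hx : x ∈ l) :
    TWV.tm p n (x ^ p ^ e) ∈ J p n e l := by
  apply Ideal.subset_span
  show _ ∈ {r | r ∈ _}
  simpa using List.mem_map_of_mem (f := fun x => TWV.tm p n (x ^ p ^ e)) hx

lemma J_append (e : ℕ) (l₁ l₂ : List R) :
    J p n e (l₁ ++ l₂) = J p n e l₁ ⊔ J p n e l₂ := by
  rw [J, List.map_append, Ideal.ofList_append]; rfl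

lemma c0_mem_J {e : ℕ} {l : List R} {α : TruncatedWittVector p (n+1) R}
    (hα : α ∈ J p (n+1) e l) : c0 α ∈ Ideal.ofList (l.map (· ^ p ^ e)) := by
  have h1 : Ideal.map (c0 (p := p) (R := R) (n := n)) (J p (n+1) e l)
      ≤ Ideal.ofList (l.map (· ^ p ^ e)) := by
    rw [J, Ideal.map_ofList, List.map_map]
    apply Ideal.span_mono
    intro r hr
    simp only [Set.mem_setOf_eq, List.mem_map, Function.comp] at hr
    rcases hr with ⟨x, hx, rfl⟩
    show c0 (TWV.tm p (n+1) (x ^ p ^ e)) ∈ {r | r ∈ _}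
    rw [c0_tm]
    simpa using List.mem_map_of_mem (f := fun x => x ^ p ^ e) hx
  exact h1 (Ideal.mem_map_of_mem _ hα)

lemma lift_mem {e : ℕ} {l : List R} {b : R}
    (hb : b ∈ Ideal.ofList (l.map (· ^ p ^ e))) :
    ∃ δ ∈ J p (n+1) e l, c0 δ = b := by
  rw [mem_ofList_iff] at hb
  obtain ⟨c, hc⟩ := hb
  refine ⟨∑ i, TWV.tm p (n+1) (c i) * TWV.tm p (n+1) ((l.get (i.cast (l.length_map _))) ^ p ^ e),
    ?_, ?_⟩
  · apply Ideal.sum_mem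
    intro i _
    exact Ideal.mul_mem_left _ _ (tm_mem_J (List.get_mem _ _))
  · rw [map_sum]
    rw [← hc]
    apply Finset.sum_congr rfl
    intro i _
    rw [map_mul, c0_tm, c0_tm]
    congr 1
    rw [List.get_eq_getElem, List.get_eq_getElem, List.getElem_map]
    rfl

lemma V_mem_J [CharP R p] {e : ℕ} {l : List R} {γ : TruncatedWittVector p n R}
    (hγ : γ ∈ J p n (e+1) l) : TWV.V γ ∈ J p (n+1) e l := by
  rw [J, mem_ofList_iff] at hγ
  obtain ⟨c, hc⟩ := hγ
  rw [← hc, show TWV.V = ⇑(Vhom (p := p) (R := R) (n := n)) from rfl, map_sum]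
  apply Ideal.sum_mem
  intro i _
  show TWV.V _ ∈ _
  set x := l.get (i.cast (l.length_map _)) with hx
  have hget : (l.map fun x => TWV.tm p n (x ^ p ^ (e+1))).get i = TWV.tm p n (x ^ p ^ (e+1)) := by
    rw [List.get_eq_getElem, List.getElem_map]; rfl
  rw [hget]
  have hp1 : x ^ p ^ (e+1) = (x ^ p ^ e) ^ p := by rw [← pow_mul, pow_succ]
  rw [hp1, mul_comm, ← tm_mul_V]
  exact Ideal.mul_mem_right _ _ (tm_mem_J (List.get_mem _ _))

end TWVAux
end Ideals
section Main
open WittVector TruncatedWittVector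
namespace TWVAux
variable {p : ℕ} [hp : Fact p.Prime] {R : Type*} [CommRing R]

/-- Regularity hypothesis on `R` for all Frobenius powers. -/
def HRhyp (p : ℕ) {R : Type*} [CommRing R] (l : List R) : Prop :=
  ∀ (e : ℕ) (l₁ : List R) (x : R) (l₂ : List R), l = l₁ ++ x :: l₂ →
    ∀ a : R, x ^ p ^ e * a ∈ Ideal.ofList (l₁.map (· ^ p ^ e)) →
      a ∈ Ideal.ofList (l₁.map (· ^ p ^ e))

lemma HRhyp.prefix {l l₂ : List R} (h : HRhyp p (l ++ l₂)) : HRhyp p l := by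
  intro e l₁ x l₂' hdec a ha
  exact h e l₁ x (l₂' ++ l₂) (by rw [hdec, List.append_assoc, List.cons_append]) a ha

lemma J_singleton (n e : ℕ) (x : R) :
    J p n e [x] = Ideal.span {TWV.tm p n (x ^ p ^ e)} := by
  rw [J, List.map_singleton, Ideal.ofList_singleton]

variable [CharP R p]

lemma Vfact : ∀ (l : List R), HRhyp p l → ∀ (n e : ℕ) (β : TruncatedWittVector p n R),
    TWV.V β ∈ J p (n+1) e l → β ∈ J p n (e+1) l := by
  intro l
  induction l using List.reverseRecOn with
  | nil =>
    intro _ n e β hβ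
    have h0 : TWV.V β = 0 := by simpa [J, Ideal.ofList] using hβ
    have hβ0 : β = 0 := V_injective (by rw [h0, V_zero])
    simp [hβ0]
  | append_singleton l' x ih =>
    intro hr n e β hβ
    have hr' : HRhyp p l' := HRhyp.prefix (l₂ := [x]) hr
    rw [J_append] at hβ
    obtain ⟨γ, hγ, w, hw, hsum⟩ := Submodule.mem_sup.mp hβ
    rw [J_singleton, Ideal.mem_span_singleton'] at hw
    obtain ⟨c, rfl⟩ := hw
    -- zeroth coefficient analysis
    have hc0 : x ^ p ^ e * c0 c = - c0 γ := by
      have := congrArg (c0 (p := p) (R := R) (n := n)) hsum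
      rw [c0_V, map_add, map_mul, c0_tm] at this
      linear_combination this
    have hmem : x ^ p ^ e * c0 c ∈ Ideal.ofList (l'.map (· ^ p ^ e)) := by
      rw [hc0]; exact neg_mem (c0_mem_J hγ)
    have hb : c0 c ∈ Ideal.ofList (l'.map (· ^ p ^ e)) :=
      hr e l' x [] rfl _ hmem
    obtain ⟨δ, hδJ, hδ0⟩ := lift_mem (n := n) hb
    obtain ⟨γ', hγ'⟩ := exists_V (c - δ) (by rw [map_sub, hδ0, sub_self])
    -- rearrange
    have key : TWV.V (β - TWV.tm p n (x ^ p ^ (e+1)) * γ')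
        = γ + δ * TWV.tm p (n+1) (x ^ p ^ e) := by
      have h1 : TWV.tm p (n+1) (x ^ p ^ e) * TWV.V γ'
          = TWV.V (TWV.tm p n (x ^ p ^ (e+1)) * γ') := by
        rw [tm_mul_V, ← pow_mul, pow_succ]
      have hc : c = δ + TWV.V γ' := by linear_combination hγ'
      have h2 : TWV.V β = γ + (δ + TWV.V γ') * TWV.tm p (n+1) (x ^ p ^ e) := by
        rw [← hsum, hc]
      have h3 := V_add (β - TWV.tm p n (x ^ p ^ (e+1)) * γ') (TWV.tm p n (x ^ p ^ (e+1)) * γ')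
      rw [sub_add_cancel] at h3
      have h4 : TWV.V (β - TWV.tm p n (x ^ p ^ (e+1)) * γ')
          = TWV.V β - TWV.V (TWV.tm p n (x ^ p ^ (e+1)) * γ') := by
        rw [h3]; ring
      rw [h4, h2, ← h1]
      ring
    have hmem2 : TWV.V (β - TWV.tm p n (x ^ p ^ (e+1)) * γ') ∈ J p (n+1) e l' := by
      rw [key]
      exact add_mem hγ (Ideal.mul_mem_right _ _ hδJ)
    have hfin : β - TWV.tm p n (x ^ p ^ (e+1)) * γ' ∈ J p n (e+1) l' :=
      ih hr' n e _ hmem2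
    have hle : J p n (e+1) l' ≤ J p n (e+1) (l' ++ [x]) := by
      rw [J_append]; exact le_sup_left
    have hx : TWV.tm p n (x ^ p ^ (e+1)) * γ' ∈ J p n (e+1) (l' ++ [x]) :=
      Ideal.mul_mem_right _ _ (tm_mem_J (by simp))
    have := add_mem (hle hfin) hx
    simpa using this

lemma Alem : ∀ (n e : ℕ) (l₁ : List R) (x : R), HRhyp p (l₁ ++ [x]) →
    ∀ α : TruncatedWittVector p n R,
      TWV.tm p n (x ^ p ^ e) * α ∈ J p n e l₁ → α ∈ J p n e l₁ := by
  intro n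
  induction n with
  | zero =>
    intro e l₁ x _ α _
    have : α = 0 := by
      ext i
      exact absurd i.2 (Nat.not_lt_zero _)
    simp [this]
  | succ n ih =>
    intro e l₁ x hr α hα
    have hmem : x ^ p ^ e * c0 α ∈ Ideal.ofList (l₁.map (· ^ p ^ e)) := by
      have := c0_mem_J hα
      rwa [map_mul, c0_tm] at this
    have hb : c0 α ∈ Ideal.ofList (l₁.map (· ^ p ^ e)) := hr e l₁ x [] rfl _ hmem
    obtain ⟨δ, hδJ, hδ0⟩ := lift_mem (n := n) hb
    obtain ⟨γ, hγ⟩ := exists_V (α - δ) (by rw [map_sub, hδ0, sub_self])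
    have h1 : TWV.tm p (n+1) (x ^ p ^ e) * TWV.V γ
        = TWV.V (TWV.tm p n (x ^ p ^ (e+1)) * γ) := by
      rw [tm_mul_V, ← pow_mul, pow_succ]
    have hVmem : TWV.V (TWV.tm p n (x ^ p ^ (e+1)) * γ) ∈ J p (n+1) e l₁ := by
      rw [← h1]
      have : TWV.tm p (n+1) (x ^ p ^ e) * TWV.V γ
          = TWV.tm p (n+1) (x ^ p ^ e) * α - TWV.tm p (n+1) (x ^ p ^ e) * δ := by
        rw [← hγ]; ring
      rw [this]
      exact sub_mem hα (Ideal.mul_mem_left _ _ hδJ)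
    have hγmem : TWV.tm p n (x ^ p ^ (e+1)) * γ ∈ J p n (e+1) l₁ :=
      Vfact l₁ (HRhyp.prefix hr) n e _ hVmem
    have hγmem2 : γ ∈ J p n (e+1) l₁ := ih (e+1) l₁ x hr γ hγmem
    have hVγ : TWV.V γ ∈ J p (n+1) e l₁ := V_mem_J hγmem2
    have : α = δ + TWV.V γ := by rw [← hγ]; ring
    rw [this]
    exact add_mem hδJ hVγ

end TWVAux
end Main
section Final
open WittVector TruncatedWittVector RingTheory.Sequence
namespace TWVAux
variable {p : ℕ} [hp : Fact p.Prime] {R : Type*} [CommRing R]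

lemma smul_top_eq {A : Type*} [CommRing A] (I : Ideal A) :
    I • (⊤ : Submodule A A) = I := by
  rw [smul_eq_mul, Ideal.mul_top]

lemma isSMulRegular_quot_iff {A : Type*} [CommRing A] (I : Ideal A) (t : A) :
    IsSMulRegular (A ⧸ (I • ⊤ : Submodule A A)) t ↔ ∀ a, t * a ∈ I → a ∈ I := by
  constructor
  · intro hreg a ha
    have h1 : t • (Submodule.Quotient.mk a : A ⧸ (I • ⊤ : Submodule A A))
        = t • (Submodule.Quotient.mk (0 : A)) := by
      rw [← Submodule.Quotient.mk_smul, ← Submodule.Quotient.mk_smul]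
      rw [Submodule.Quotient.eq]
      rw [smul_top_eq]
      simpa [smul_eq_mul] using ha
    have := hreg h1
    rw [Submodule.Quotient.eq, smul_top_eq] at this
    simpa using this
  · intro himp u v huv
    obtain ⟨a, rfl⟩ := Submodule.Quotient.mk_surjective _ u
    obtain ⟨b, rfl⟩ := Submodule.Quotient.mk_surjective _ v
    dsimp only at huv
    rw [← Submodule.Quotient.mk_smul, ← Submodule.Quotient.mk_smul,
      Submodule.Quotient.eq, smul_top_eq] at huv
    rw [Submodule.Quotient.eq, smul_top_eq]
    have : t • a - t • b = t * (a - b) := by simp [smul_eq_mul]; ring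
    rw [this] at huv
    exact himp _ huv

lemma J_zero_eq (n : ℕ) (l : List R) :
    J p n 0 l = Ideal.ofList (l.map (TWV.tm p n)) := by
  rw [J]
  congr 1
  apply List.map_congr_left
  intro x _
  simp

end TWVAux
end Final
end TWVAuxSec

open TWVAux RingTheory.Sequence in
/-- If `x₁^{p^e}, …, x_r^{p^e}` is a regular sequence on `R` for all `e ≥ 0`,
then `[x₁], …, [x_r]` is a regular sequence on `W_n(R)` for every `n ≥ 1`. -/
theorem stmt13 {p : ℕ} [Fact p.Prime] {R : Type*} [CommRing R] [CharP R p]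
    (xs : List R)
    (h : ∀ e : ℕ, RingTheory.Sequence.IsRegular R (xs.map (· ^ p ^ e)))
    (n : ℕ) (hn : 1 ≤ n) :
    RingTheory.Sequence.IsRegular (TruncatedWittVector p n R)
      (xs.map (TWV.tm p n)) := by
  have HRxs : HRhyp p xs := by
    intro e l₁ x l₂ hdec a ha
    have h1 := (h e).toIsWeaklyRegular
    rw [hdec, List.map_append, isWeaklyRegular_append_iff, List.map_cons,
      isWeaklyRegular_cons_iff] at h1
    exact (isSMulRegular_quot_iff _ _).mp h1.2.1 a ha
  obtain ⟨m, rfl⟩ : ∃ m, n = m + 1 := ⟨n - 1, by omega⟩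
  refine ⟨⟨?_⟩, ?_⟩
  · intro i hi
    rw [List.length_map] at hi
    have hgi : (xs.map (TWV.tm p (m+1)))[i] = TWV.tm p (m+1) xs[i] := List.getElem_map _
    have htk : (xs.map (TWV.tm p (m+1))).take i = (xs.take i).map (TWV.tm p (m+1)) :=
      (List.map_take).symm
    rw [hgi, htk, ← J_zero_eq, isSMulRegular_quot_iff]
    intro α hα
    have hpre : HRhyp p (xs.take i ++ [xs[i]]) := by
      have hxs : (xs.take i ++ [xs[i]]) ++ xs.drop (i+1) = xs := by
        rw [List.append_assoc, List.singleton_append]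
        rw [show xs[i] :: xs.drop (i+1) = xs.drop i from (List.getElem_cons_drop hi)]
        exact List.take_append_drop i xs
      rw [← hxs] at HRxs
      exact HRxs.prefix
    have := Alem (m+1) 0 (xs.take i) xs[i] hpre α (by
      have : xs[i] ^ p ^ 0 = xs[i] := by simp
      rwa [this])
    exact this
  · intro htop
    rw [smul_top_eq] at htop
    have h1 : (1 : TruncatedWittVector p (m+1) R) ∈ J p (m+1) 0 xs := by
      rw [J_zero_eq, ← htop]; trivial
    have h2 : (1 : R) ∈ Ideal.ofList (xs.map (· ^ p ^ 0)) := by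
      have := c0_mem_J h1
      rwa [map_one] at this
    apply (h 0).top_ne_smul
    rw [smul_top_eq]
    exact (Ideal.eq_top_iff_one _).mpr h2 |>.symm
end
end
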